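/- arXiv:2605.06253 — 6 statements merged into one kernel-verified Lean document; each statement's English description precedes it below -/
import Mathlib

section
/- Let n ≥ 1 and m ≥ 2n+2 be integers. If G is a simple graph on m+1 vertices such that G contains no subgraph isomorphic to K_{2,n} and the complement of G contains no cycle of length m, then the complement of G is 2-connected. -/
/-- `G` contains a subgraph isomorphic to `H` (not necessarily induced),
i.e. there is an injective graph homomorphism from `H` to `G`. -/
def Contains {V W : Type*} (G : SimpleGraph V) (H : SimpleGraph W) : Prop :=
  ∃ f : H →g G, Function.Injective f

/-- `G` contains a cycle of length `k`. -/
def HasCycleLength {V : Type*} (G : SimpleGraph V) (k : ℕ) : Prop :=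
  ∃ (v : V) (c : G.Walk v v), c.IsCycle ∧ c.length = k

/-- `G` is 2-connected: it has at least 3 vertices and deleting any single
vertex leaves a connected graph. -/
def TwoConnected {V : Type*} [Fintype V] (G : SimpleGraph V) : Prop :=
  3 ≤ Fintype.card V ∧ ∀ v : V, (G.induce ({v}ᶜ : Set V)).Connected

section DiracPart
open SimpleGraph List

variable {W : Type*}

/-- Build a walk from a list whose consecutive entries are adjacent. -/
def walkOfChain (H : SimpleGraph W) : (l : List W) → l.Chain' H.Adj → (h : l ≠ []) → H.Walk (l.head h) (l.getLast h)
  | [_], _, _ => SimpleGraph.Walk.nil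
  | a :: b :: t, hc, _ =>
    SimpleGraph.Walk.cons ((List.isChain_cons.mp hc).1 b rfl)
      ((walkOfChain H (b :: t) (List.isChain_cons.mp hc).2 (by simp)).copy rfl
        (by simp [List.getLast_cons]))

lemma walkOfChain_support (H : SimpleGraph W) : ∀ (l : List W) (hc : l.Chain' H.Adj) (h : l ≠ []),
    (walkOfChain H l hc h).support = l
  | [_], _, _ => rfl
  | a :: b :: t, hc, _ => by
    simp only [walkOfChain, SimpleGraph.Walk.support_cons, SimpleGraph.Walk.support_copy]
    exact congrArg (a :: ·)
      ((SimpleGraph.Walk.support_copy _ _ _).trans (walkOfChain_support H (b :: t) _ _))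

lemma edge_head_eq_snd {H : SimpleGraph W} {u v w : W} {p : H.Walk u v} (hp : p.IsPath)
    (h : s(u, w) ∈ p.edges) : w = p.support.getD 1 w := by
  cases p with
  | nil => simp at h
  | cons hadj q =>
    rw [SimpleGraph.Walk.edges_cons] at h
    rcases List.mem_cons.mp h with h1 | h2
    · rcases Sym2.eq_iff.mp h1 with ⟨-, rfl⟩ | ⟨rfl, rfl⟩
      · rw [SimpleGraph.Walk.support_cons, SimpleGraph.Walk.support_eq_cons q]; rfl
      · exact absurd rfl hadj.ne
    · exact absurd (SimpleGraph.Walk.fst_mem_support_of_mem_edges q h2)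
        ((SimpleGraph.Walk.cons_isPath_iff _ _).mp hp).2

lemma exists_max_path [Fintype W] [Nonempty W] (H : SimpleGraph W) :
    ∃ (u v : W) (p : H.Walk u v), p.IsPath ∧
      ∀ (a b : W) (q : H.Walk a b), q.IsPath → q.length ≤ p.length := by
  classical
  set P : ℕ → Prop := fun k => ∃ (u v : W) (q : H.Walk u v), q.IsPath ∧ q.length = k with hP
  have h0 : P 0 := ⟨Classical.arbitrary W, _, SimpleGraph.Walk.nil, by simp, rfl⟩
  obtain ⟨u, v, p, hp, hlen⟩ : P (Nat.findGreatest P (Fintype.card W)) :=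
    Nat.findGreatest_spec (Nat.zero_le _) h0
  refine ⟨u, v, p, hp, fun a b q hq => ?_⟩
  rw [hlen]
  exact Nat.le_findGreatest (le_of_lt hq.length_lt) ⟨a, b, q, hq, rfl⟩

theorem dirac [DecidableEq W] [Fintype W] (H : SimpleGraph W) [DecidableRel H.Adj] (δ : ℕ)
    (hM3 : 3 ≤ Fintype.card W) (hdeg : ∀ w : W, δ ≤ H.degree w)
    (h2δ : Fintype.card W ≤ 2 * δ) :
    ∃ (x : W) (c : H.Walk x x), c.IsCycle ∧ c.length = Fintype.card W := by
  classical
  set M := Fintype.card W with hM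
  have hne : Nonempty W := Fintype.card_pos_iff.mp (by omega)
  obtain ⟨v0, vk, p, hp, hmax⟩ := exists_max_path H
  set k := p.length with hk
  set s := p.support with hs
  have hslen : s.length = k + 1 := p.length_support
  have hnodup : s.Nodup := hp.support_nodup
  have hkM : k + 1 ≤ M := hp.length_lt
  -- all neighbours of the endpoints lie on the path
  have hnb0 : ∀ w, H.Adj v0 w → w ∈ s := by
    intro w hw
    by_contra hws
    exact absurd (hmax _ _ (SimpleGraph.Walk.cons hw.symm p)
      ((SimpleGraph.Walk.cons_isPath_iff _ _).mpr ⟨hp, hws⟩)) (by simp [hk])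
  have hnbk : ∀ w, H.Adj vk w → w ∈ s := by
    intro w hw
    by_contra hws
    have : w ∉ p.reverse.support := by rwa [SimpleGraph.Walk.support_reverse, List.mem_reverse]
    exact absurd (hmax _ _ (SimpleGraph.Walk.cons hw.symm p.reverse)
      ((SimpleGraph.Walk.cons_isPath_iff _ _).mpr ⟨hp.reverse, this⟩)) (by simp [hk])
  have hδ2 : 2 ≤ δ := by omega
  have hkδ : δ ≤ k := by
    have hsub : H.neighborFinset v0 ⊆ s.toFinset.erase v0 := by
      intro w hw
      rw [SimpleGraph.mem_neighborFinset] at hw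
      exact Finset.mem_erase.mpr ⟨hw.ne', List.mem_toFinset.mpr (hnb0 w hw)⟩
    have := Finset.card_le_card hsub
    rw [Finset.card_erase_of_mem (List.mem_toFinset.mpr (by
      rw [hs]; exact SimpleGraph.Walk.start_mem_support p)),
      List.toFinset_card_of_nodup hnodup, hslen] at this
    have := hdeg v0
    rw [SimpleGraph.degree] at this
    omega
  have hk2 : 2 ≤ k := le_trans hδ2 hkδ
  have hhead : s.getD 0 v0 = v0 := by
    rw [hs, SimpleGraph.Walk.support_eq_cons]; rfl
  have hlastmem : s ≠ [] := by rw [← List.length_pos_iff]; omega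
  have hlast : s.getLast hlastmem = vk := p.getLast_support
  have hlastD : s.getD k v0 = vk := by
    have h1 : s[k]'(by omega) = s.getLast hlastmem := by
      rw [List.getLast_eq_getElem]
      congr 1
      omega
    rw [List.getD_eq_getElem s v0 (by omega), h1, hlast]
  -- pigeonhole for the crossing chords
  set A : Finset ℕ := (Finset.range k).filter (fun i => H.Adj v0 (s.getD (i+1) v0)) with hA
  set B : Finset ℕ := (Finset.range k).filter (fun i => H.Adj (s.getD i v0) vk) with hB
  have hgetD : ∀ w ∈ s, s.getD (s.idxOf w) v0 = w := by
    intro w hw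
    rw [List.getD_eq_getElem s v0 (List.idxOf_lt_length_iff.mpr hw)]
    exact List.getElem_idxOf _
  have cardA : δ ≤ A.card := by
    refine le_trans (hdeg v0) (Finset.card_le_card_of_injOn (fun w => s.idxOf w - 1) ?_ ?_)
    · intro w hw
      rw [Finset.mem_coe, SimpleGraph.mem_neighborFinset] at hw
      have hws : w ∈ s := hnb0 w hw
      have hidx : s.idxOf w < k + 1 := hslen ▸ List.idxOf_lt_length_iff.mpr hws
      have hne0 : s.idxOf w ≠ 0 := by
        intro h0
        apply hw.ne'
        rw [← hgetD w hws, h0, hhead]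
      show s.idxOf w - 1 ∈ A
      rw [hA, Finset.mem_filter, Finset.mem_range]
      refine ⟨by omega, ?_⟩
      rw [Nat.sub_add_cancel (by omega), hgetD w hws]
      exact hw
    · intro w1 h1 w2 h2 heq
      rw [Finset.mem_coe, SimpleGraph.mem_neighborFinset] at h1 h2
      simp only [] at heq
      have hw1 : w1 ∈ s := hnb0 w1 h1
      have hw2 : w2 ∈ s := hnb0 w2 h2
      have hne1 : s.idxOf w1 ≠ 0 := fun h0 => h1.ne' (by rw [← hgetD w1 hw1, h0, hhead])
      have hne2 : s.idxOf w2 ≠ 0 := fun h0 => h2.ne' (by rw [← hgetD w2 hw2, h0, hhead])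
      exact (List.idxOf_inj hw1).mp (by omega)
  have cardB : δ ≤ B.card := by
    refine le_trans (hdeg vk) (Finset.card_le_card_of_injOn (fun w => s.idxOf w) ?_ ?_)
    · intro w hw
      rw [Finset.mem_coe, SimpleGraph.mem_neighborFinset] at hw
      have hws : w ∈ s := hnbk w hw
      have hidx : s.idxOf w < k + 1 := hslen ▸ List.idxOf_lt_length_iff.mpr hws
      have hnek : s.idxOf w ≠ k := by
        intro h0
        apply hw.ne'
        rw [← hgetD w hws, h0, hlastD]
      show s.idxOf w ∈ B
      rw [hB, Finset.mem_filter, Finset.mem_range]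
      refine ⟨by omega, ?_⟩
      rw [hgetD w hws]
      exact hw.symm
    · intro w1 h1 w2 h2 heq
      rw [Finset.mem_coe, SimpleGraph.mem_neighborFinset] at h1 h2
      exact (List.idxOf_inj (hnbk w1 h1)).mp heq
  obtain ⟨i, hiAB⟩ : ∃ i, i ∈ A ∩ B := by
    have h1 := Finset.card_inter_add_card_union A B
    have h2 : (A ∪ B).card ≤ k := by
      refine le_trans (Finset.card_le_card ?_) (le_of_eq (Finset.card_range k))
      exact Finset.union_subset (Finset.filter_subset _ _) (Finset.filter_subset _ _)
    have : 0 < (A ∩ B).card := by omega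
    exact Finset.card_pos.mp this
  rw [Finset.mem_inter, hA, hB, Finset.mem_filter, Finset.mem_filter, Finset.mem_range] at hiAB
  obtain ⟨⟨hik, hadjA⟩, -, hadjB⟩ := hiAB
  -- the crossing-chord cycle
  set x := s.getD (i+1) v0 with hx
  have hi1 : i + 1 < s.length := by omega
  have hxmem : x ∈ s := by
    rw [hx, List.getD_eq_getElem s v0 hi1]
    exact List.getElem_mem _
  set L : List W := s.take (i+1) ++ (s.drop (i+1)).reverse with hL
  have hperm : L.Perm s := by
    calc L ~ s.take (i+1) ++ s.drop (i+1) := List.Perm.append_left _ (List.reverse_perm _)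
    _ = s := List.take_append_drop _ _
  have hLnodup : L.Nodup := hperm.nodup_iff.mpr hnodup
  have hLlen : L.length = k + 1 := by rw [hperm.length_eq, hslen]
  have hLne : L ≠ [] := by rw [← List.length_pos_iff]; omega
  have hdropne : s.drop (i+1) ≠ [] := by
    rw [← List.length_pos_iff, List.length_drop]; omega
  have hrevne : (s.drop (i+1)).reverse ≠ [] := by simpa using hdropne
  have htakelen : (s.take (i+1)).length = i + 1 := by
    rw [List.length_take]; omega
  have htakene : s.take (i+1) ≠ [] := by rw [← List.length_pos_iff]; omega
  have hLhead : L.head hLne = v0 := by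
    rw [List.head_eq_getElem]
    show (s.take (i+1) ++ (s.drop (i+1)).reverse)[0]'(by rw [← hL]; omega) = v0
    rw [List.getElem_append_left (by omega), List.getElem_take,
      ← List.getD_eq_getElem s v0 (by omega)]
    exact hhead
  have hLlast : L.getLast hLne = x := by
    show (s.take (i+1) ++ (s.drop (i+1)).reverse).getLast (by rw [← hL]; exact hLne) = x
    rw [List.getLast_append_of_right_ne_nil _ _ hrevne, List.getLast_reverse, List.head_drop,
      hx, List.getD_eq_getElem s v0 hi1]
  have hLchain : L.Chain' H.Adj := by
    rw [hL]
    apply List.IsChain.append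
    · exact (p.isChain_adj_support).take _
    · rw [List.isChain_reverse]
      exact ((p.isChain_adj_support).drop _).imp (fun a b h => h.symm)
    · intro a ha b hb
      rw [List.getLast?_eq_getLast htakene, Option.mem_some_iff] at ha
      rw [List.head?_reverse, List.getLast?_eq_getLast hdropne, Option.mem_some_iff] at hb
      have hA' : a = s[i]'(by omega) := by
        rw [← ha, List.getLast_eq_getElem]
        have : (s.take (i+1)).length - 1 = i := by omega
        simp_rw [this]
        rw [List.getElem_take]
      have hB' : b = vk := by
        rw [← hb, List.getLast_eq_getElem]
        have hlen : (s.drop (i+1)).length - 1 = k - i - 1 := by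
          rw [List.length_drop]; omega
        simp_rw [hlen]
        rw [List.getElem_drop, ← List.getD_eq_getElem s v0 (by omega)]
        have : i + 1 + (k - i - 1) = k := by omega
        rw [this, hlastD]
      rw [hA', hB']
      have := hadjB
      rwa [List.getD_eq_getElem s v0 (by omega)] at this
  -- build the cycle
  have hadjx : H.Adj v0 x := hadjA
  set P : H.Walk v0 x := ((walkOfChain H L hLchain hLne).copy hLhead hLlast) with hPdef
  have hPsup : P.support = L := by
    rw [hPdef, SimpleGraph.Walk.support_copy, walkOfChain_support]
  have hPpath : P.IsPath := by
    rw [SimpleGraph.Walk.isPath_def, hPsup]; exact hLnodup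
  have hPlen : P.length = k := by
    have h1 := P.length_support
    rw [hPsup, hLlen] at h1; omega
  have hedge : s(x, v0) ∉ P.edges := by
    intro he
    rw [Sym2.eq_swap] at he
    have h1 := edge_head_eq_snd hPpath he
    rw [hPsup, List.getD_eq_getElem L x (by omega)] at h1
    have h3 : x = L[k]'(by omega) := by
      have h5 : L.getLast hLne = L[L.length - 1]'(by
        have := List.length_pos_iff.mpr hLne; omega) := List.getLast_eq_getElem _
      rw [hLlast] at h5
      convert h5 using 2
      omega
    have h4 : L[1]'(by omega) = L[k]'(by omega) := h1.symm.trans h3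
    have : (1 : ℕ) = k := (List.Nodup.getElem_inj_iff hLnodup).mp h4
    omega
  set c : H.Walk x x := SimpleGraph.Walk.cons hadjx.symm P with hcdef
  have hcyc : c.IsCycle := SimpleGraph.Path.cons_isCycle ⟨P, hPpath⟩ hadjx.symm hedge
  have hclen : c.length = k + 1 := by
    rw [hcdef, SimpleGraph.Walk.length_cons, hPlen]
  have hcsup : c.support = x :: L := by
    rw [hcdef, SimpleGraph.Walk.support_cons, hPsup]
  by_cases hkM' : k + 1 = M
  · exact ⟨x, c, hcyc, by rw [hclen, hkM']⟩
  exfalso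
  have hklt : k + 1 < M := lt_of_le_of_ne hkM hkM'
  obtain ⟨z, hz⟩ : ∃ z, z ∉ s := by
    by_contra h; push_neg at h
    have h1 : (Finset.univ : Finset W) ⊆ s.toFinset := fun z _ => List.mem_toFinset.mpr (h z)
    have h2 := Finset.card_le_card h1
    rw [List.toFinset_card_of_nodup hnodup, hslen, Finset.card_univ, ← hM] at h2
    omega
  obtain ⟨y, hys, hzy⟩ : ∃ y, y ∈ s ∧ H.Adj z y := by
    by_contra h; push_neg at h
    have hsub : H.neighborFinset z ⊆ (insert z s.toFinset)ᶜ := by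
      intro y hy
      rw [SimpleGraph.mem_neighborFinset] at hy
      rw [Finset.mem_compl, Finset.mem_insert]
      push_neg
      exact ⟨hy.ne', fun hm => h y (List.mem_toFinset.mp hm) hy⟩
    have hcard := Finset.card_le_card hsub
    rw [Finset.card_compl, Finset.card_insert_of_notMem (fun hm => hz (List.mem_toFinset.mp hm)),
      List.toFinset_card_of_nodup hnodup, hslen] at hcard
    have h2 := hdeg z
    rw [SimpleGraph.degree] at h2
    rw [← hM] at hcard
    omega
  have hyc : y ∈ c.support := by
    rw [hcsup]; exact List.mem_cons_of_mem _ (hperm.mem_iff.mpr hys)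
  set c' := c.rotate _ hyc with hc'def
  have hc'cyc : c'.IsCycle := hcyc.rotate hyc
  have hc'len : c'.length = k + 1 := by
    have h1 := (SimpleGraph.Walk.rotate_darts c _ hyc).perm.length_eq
    rw [SimpleGraph.Walk.length_darts, SimpleGraph.Walk.length_darts, hclen] at h1
    exact h1
  obtain ⟨w, hyw, q, hq⟩ := SimpleGraph.Walk.not_nil_iff.mp hc'cyc.not_nil
  have hqpath : q.IsPath := by
    have h1 := hq ▸ hc'cyc
    exact ((SimpleGraph.Walk.cons_isCycle_iff _ _).mp h1).1
  have hqlen : q.length + 1 = k + 1 := by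
    have h1 : c'.length = q.length + 1 := by rw [hq, SimpleGraph.Walk.length_cons]
    omega
  have hzc : z ∉ c.support := by
    rw [hcsup]
    intro hmem
    rcases List.mem_cons.mp hmem with rfl | hmem2
    · exact hz hxmem
    · exact hz (hperm.mem_iff.mp hmem2)
  have hqsub : ∀ a, a ∈ q.support → a ∈ c.support := by
    intro a haq
    have h1 : a ∈ c'.support := by
      rw [hq, SimpleGraph.Walk.support_cons]; exact List.mem_cons_of_mem _ haq
    rw [SimpleGraph.Walk.support_eq_cons c'] at h1
    rcases List.mem_cons.mp h1 with rfl | h2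
    · exact hyc
    · have h3 := (SimpleGraph.Walk.support_rotate c _ hyc).mem_iff.mp h2
      exact List.mem_of_mem_tail h3
  -- the longer path: z, y = start of c', ..., w
  have hfinal : (SimpleGraph.Walk.cons hzy q.reverse).IsPath := by
    rw [SimpleGraph.Walk.cons_isPath_iff]
    refine ⟨hqpath.reverse, ?_⟩
    rw [SimpleGraph.Walk.support_reverse, List.mem_reverse]
    exact fun hmem => hzc (hqsub z hmem)
  have := hmax _ _ _ hfinal
  rw [SimpleGraph.Walk.length_cons, SimpleGraph.Walk.length_reverse] at this
  omega


lemma contains_of_common {n : ℕ} {V : Type} [DecidableEq V] {G : SimpleGraph V} {s w : V}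
    (hsw : s ≠ w) (T : Finset V) (hc : n ≤ T.card)
    (hT : ∀ y ∈ T, G.Adj s y ∧ G.Adj w y) :
    Contains G (completeBipartiteGraph (Fin 2) (Fin n)) := by
  obtain ⟨T', hT'sub, hT'card⟩ := Finset.exists_subset_card_eq hc
  have e : Fin n ≃ {x // x ∈ T'} := (T'.equivFinOfCardEq hT'card).symm
  have hmemT : ∀ j : Fin n, ((e j : {x // x ∈ T'}) : V) ∈ T := fun j => hT'sub (e j).2
  have hadj : ∀ i : Fin 2, ∀ j : Fin n, G.Adj (![s, w] i) ((e j : {x // x ∈ T'}) : V) := by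
    intro i j
    fin_cases i
    · simpa using (hT _ (hmemT j)).1
    · simpa using (hT _ (hmemT j)).2
  set f : Fin 2 ⊕ Fin n → V := Sum.elim ![s, w] (fun j => ((e j : {x // x ∈ T'}) : V)) with hf
  refine ⟨⟨f, ?_⟩, ?_⟩
  · intro a b hab
    rcases a with i | j <;> rcases b with i' | j'
    · exact absurd hab (by simp [completeBipartiteGraph])
    · show G.Adj (f (Sum.inl i)) (f (Sum.inr j'))
      simp only [hf, Sum.elim_inl, Sum.elim_inr]
      exact hadj i j'
    · show G.Adj (f (Sum.inr j)) (f (Sum.inl i'))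
      simp only [hf, Sum.elim_inl, Sum.elim_inr]
      exact (hadj i' j).symm
    · exact absurd hab (by simp [completeBipartiteGraph])
  · intro a b hab
    change f a = f b at hab
    rcases a with i | j <;> rcases b with i' | j'
    · simp only [hf, Sum.elim_inl] at hab
      congr 1
      fin_cases i <;> fin_cases i' <;> simp_all
    · simp only [hf, Sum.elim_inl, Sum.elim_inr] at hab
      exact absurd hab ((hadj i j').ne)
    · simp only [hf, Sum.elim_inl, Sum.elim_inr] at hab
      exact absurd hab.symm ((hadj i' j).ne)
    · simp only [hf, Sum.elim_inr] at hab
      congr 1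
      exact e.injective (Subtype.ext hab)

end DiracPart

section MainPart

lemma singleton_case (n m : ℕ) (hn : 1 ≤ n) (hm : 2 * n + 2 ≤ m)
    (V : Type) [Fintype V] (hV : Fintype.card V = m + 1) (G : SimpleGraph V)
    (hfree : ¬ Contains G (completeBipartiteGraph (Fin 2) (Fin n)))
    (v s : V) (hvs : v ≠ s)
    (hadj : ∀ y : V, y ≠ v → y ≠ s → G.Adj s y) : HasCycleLength Gᶜ m := by
  classical
  set S : Set V := {s}ᶜ with hS
  set H : SimpleGraph S := Gᶜ.induce S with hH
  have hcardS : Fintype.card S = m := by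
    show Fintype.card ({s}ᶜ : Set V) = m
    rw [Fintype.card_compl_set]
    simp [hV]
  have hvmem : v ∈ S := by
    show v ∈ ({s}ᶜ : Set V)
    simp [hvs]
  -- each vertex of `S` has at most `n` G-neighbours inside `S`
  have hGnb : ∀ w : S, ((Finset.univ : Finset S).filter (fun y : S => G.Adj w.1 y.1)).card ≤ n := by
    intro w
    by_contra hlt
    push_neg at hlt
    have hws : (w : V) ≠ s := w.2
    set N := (Finset.univ : Finset S).filter (fun y : S => G.Adj w.1 y.1) with hN
    set T := (N.erase ⟨v, hvmem⟩).image (fun y : S => (y : V)) with hT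
    have hTcard : n ≤ T.card := by
      rw [hT, Finset.card_image_of_injective _ Subtype.val_injective]
      have h1 := Finset.card_erase_le (s := N) (a := (⟨v, hvmem⟩ : S))
      have h2 := Finset.pred_card_le_card_erase (s := N) (a := (⟨v, hvmem⟩ : S))
      omega
    have hTprop : ∀ y ∈ T, G.Adj s y ∧ G.Adj w.1 y := by
      intro y hy
      rw [hT, Finset.mem_image] at hy
      obtain ⟨y', hy', rfl⟩ := hy
      rw [Finset.mem_erase] at hy'
      obtain ⟨hyv, hyN⟩ := hy'
      rw [hN, Finset.mem_filter] at hyN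
      have hy's : (y' : V) ≠ s := y'.2
      have hy'v : (y' : V) ≠ v := fun h => hyv (Subtype.ext h)
      exact ⟨hadj y'.1 hy'v hy's, hyN.2⟩
    exact hfree (contains_of_common (Ne.symm hws) T hTcard hTprop)
  -- hence large minimal degree in the induced complement
  have hdeg : ∀ w : S, m - n - 1 ≤ H.degree w := by
    intro w
    have hnbf : H.neighborFinset w = (Finset.univ : Finset S).filter (fun y => H.Adj w y) := by
      ext y
      simp [SimpleGraph.mem_neighborFinset]
    have hsplit := Finset.card_filter_add_card_filter_not
      (s := (Finset.univ : Finset S)) (p := fun y : S => H.Adj w y)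
    have hsub : (Finset.univ : Finset S).filter (fun y : S => ¬ H.Adj w y) ⊆
        insert w ((Finset.univ : Finset S).filter (fun y : S => G.Adj w.1 y.1)) := by
      intro y hy
      rw [Finset.mem_filter] at hy
      rw [Finset.mem_insert]
      by_cases hyw : y = w
      · exact Or.inl hyw
      right
      rw [Finset.mem_filter]
      refine ⟨Finset.mem_univ _, ?_⟩
      by_contra hGadj
      apply hy.2
      show Gᶜ.Adj w.1 y.1
      rw [SimpleGraph.compl_adj]
      exact ⟨fun h => hyw (Subtype.ext h).symm, hGadj⟩
    have hcard2 : ((Finset.univ : Finset S).filter (fun y : S => ¬ H.Adj w y)).card ≤ n + 1 := by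
      refine le_trans (Finset.card_le_card hsub) (le_trans (Finset.card_insert_le _ _) ?_)
      exact Nat.succ_le_succ (hGnb w)
    have hdeg1 : H.degree w = ((Finset.univ : Finset S).filter (fun y : S => H.Adj w y)).card := by
      rw [SimpleGraph.degree, hnbf]
    rw [Finset.card_univ, hcardS] at hsplit
    omega
  obtain ⟨x, c, hcyc, hclen⟩ := dirac H (m - n - 1)
    (by rw [hcardS]; omega) hdeg (by rw [hcardS]; omega)
  rw [hcardS] at hclen
  refine ⟨x.1, SimpleGraph.Walk.map (SimpleGraph.Embedding.induce (G := Gᶜ) S).toHom c, ?_, ?_⟩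
  · exact ((SimpleGraph.Walk.map_isCycle_iff_of_injective
      (SimpleGraph.Embedding.induce (G := Gᶜ) S).injective).mpr hcyc)
  · exact (SimpleGraph.Walk.length_map ..).trans hclen

/-- If `m ≥ 2n + 2`, `G` is a graph on `m + 1` vertices with no `K_{2,n}`
subgraph and `Gᶜ` has no cycle of length `m`, then `Gᶜ` is 2-connected. -/
theorem compl_two_connected (n m : ℕ) (hn : 1 ≤ n) (hm : 2 * n + 2 ≤ m)
    (V : Type) [Fintype V] (hV : Fintype.card V = m + 1) (G : SimpleGraph V)
    (hfree : ¬ Contains G (completeBipartiteGraph (Fin 2) (Fin n)))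
    (hcyc : ¬ HasCycleLength Gᶜ m) :
    TwoConnected Gᶜ := by
  classical
  refine ⟨by omega, fun v => ?_⟩
  rw [SimpleGraph.connected_iff]
  have hcardc : Fintype.card ({v}ᶜ : Set V) = m := by
    rw [Fintype.card_compl_set]
    simp [hV]
  refine ⟨?_, Fintype.card_pos_iff.mp (by rw [hcardc]; omega)⟩
  intro a b
  by_contra hreach
  set A : Finset ({v}ᶜ : Set V) := (Finset.univ : Finset ({v}ᶜ : Set V)).filter
    (fun x => (Gᶜ.induce ({v}ᶜ : Set V)).Reachable a x) with hA
  have haA : a ∈ A := by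
    rw [hA, Finset.mem_filter]
    exact ⟨Finset.mem_univ _, SimpleGraph.Reachable.refl a⟩
  have hbA : b ∉ A := by
    intro h
    rw [hA, Finset.mem_filter] at h
    exact hreach h.2
  have hcross : ∀ x y : ({v}ᶜ : Set V), x ∈ A → y ∉ A → G.Adj x.1 y.1 := by
    intro x y hx hy
    rw [hA, Finset.mem_filter] at hx hy
    push_neg at hy
    have hnadj : ¬ (Gᶜ.induce ({v}ᶜ : Set V)).Adj x y :=
      fun h => hy (Finset.mem_univ _) (hx.2.trans h.reachable)
    have hnec : ¬ Gᶜ.Adj x.1 y.1 := hnadj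
    rw [SimpleGraph.compl_adj] at hnec
    push_neg at hnec
    have hne : (x : V) ≠ (y : V) := by
      intro h
      exact hy (Finset.mem_univ _) (Subtype.ext h ▸ hx.2)
    exact hnec hne
  have hcards : A.card + Aᶜ.card = m := by
    rw [Finset.card_add_card_compl]
    exact hcardc
  have hApos : 1 ≤ A.card := Finset.card_pos.mpr ⟨a, haA⟩
  have hBpos : 1 ≤ Aᶜ.card := Finset.card_pos.mpr ⟨b, Finset.mem_compl.mpr hbA⟩
  by_cases hA1 : A.card = 1
  · -- A = {a} : apply the singleton case with s = a
    obtain ⟨c0, hc0⟩ := Finset.card_eq_one.mp hA1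
    have hac0 : a = c0 := by
      have := haA
      rw [hc0, Finset.mem_singleton] at this
      exact this
    apply hcyc
    refine singleton_case n m hn hm V hV G hfree v a.1 (Ne.symm (Set.mem_compl_singleton_iff.mp a.2)) ?_
    intro y hyv hya
    have hymem : y ∈ ({v}ᶜ : Set V) := by simp [hyv]
    have hyA : (⟨y, hymem⟩ : ({v}ᶜ : Set V)) ∉ A := by
      intro hmem
      rw [hc0, Finset.mem_singleton] at hmem
      exact hya (congrArg Subtype.val (hmem.trans hac0.symm))
    exact hcross a ⟨y, hymem⟩ haA hyA
  by_cases hB1 : Aᶜ.card = 1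
  · obtain ⟨c0, hc0⟩ := Finset.card_eq_one.mp hB1
    have hbc0 : b = c0 := by
      have := Finset.mem_compl.mpr hbA
      rw [hc0, Finset.mem_singleton] at this
      exact this
    apply hcyc
    refine singleton_case n m hn hm V hV G hfree v b.1 (Ne.symm (Set.mem_compl_singleton_iff.mp b.2)) ?_
    intro y hyv hyb
    have hymem : y ∈ ({v}ᶜ : Set V) := by simp [hyv]
    have hyA : (⟨y, hymem⟩ : ({v}ᶜ : Set V)) ∈ A := by
      by_contra hmem
      have : (⟨y, hymem⟩ : ({v}ᶜ : Set V)) ∈ Aᶜ := Finset.mem_compl.mpr hmem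
      rw [hc0, Finset.mem_singleton] at this
      exact hyb (congrArg Subtype.val (this.trans hbc0.symm))
    exact (hcross ⟨y, hymem⟩ b hyA hbA).symm
  -- both sides have ≥ 2 elements : find a K_{2,n}
  exfalso
  by_cases hn2 : n ≤ Aᶜ.card
  · obtain ⟨x1, hx1, x2, hx2, hx12⟩ := Finset.one_lt_card.mp (by omega : 1 < A.card)
    set T := Aᶜ.image (fun y : ({v}ᶜ : Set V) => (y : V)) with hT
    have hTcard : n ≤ T.card := by
      rw [hT, Finset.card_image_of_injective _ Subtype.val_injective]
      exact hn2
    refine hfree (contains_of_common (fun h => hx12 (Subtype.ext h)) T hTcard ?_)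
    intro y hy
    rw [hT, Finset.mem_image] at hy
    obtain ⟨y', hy', rfl⟩ := hy
    have hy'A : y' ∉ A := Finset.mem_compl.mp hy'
    exact ⟨hcross x1 y' hx1 hy'A, hcross x2 y' hx2 hy'A⟩
  · obtain ⟨y1, hy1, y2, hy2, hy12⟩ := Finset.one_lt_card.mp (by omega : 1 < Aᶜ.card)
    set T := A.image (fun y : ({v}ᶜ : Set V) => (y : V)) with hT
    have hTcard : n ≤ T.card := by
      rw [hT, Finset.card_image_of_injective _ Subtype.val_injective]
      omega
    refine hfree (contains_of_common (fun h => hy12 (Subtype.ext h)) T hTcard ?_)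
    intro x hx
    rw [hT, Finset.mem_image] at hx
    obtain ⟨x', hx', rfl⟩ := hx
    exact ⟨(hcross x' y1 hx' (Finset.mem_compl.mp hy1)).symm,
      (hcross x' y2 hx' (Finset.mem_compl.mp hy2)).symm⟩

end MainPart
end

section
/- Let G be a simple graph and let C = v_1 v_2 ⋯ v_l v_1 be a cycle of maximum length l in G (indices taken modulo l). Let x and y be two distinct vertices of G not lying on C, and suppose x is adjacent in G to v_i and v_j with i ≠ j (mod l). Then y is not adjacent in G to both v_{i+1} and v_{j+1}, and y is not adjacent in G to both v_{i-1} and v_{j-1}. -/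
namespace ShiftedAux

open SimpleGraph

variable {V : Type*}

/-- Turn a `List.Chain` of adjacencies into a walk. -/
def walkOf (G : SimpleGraph V) : (u : V) → (L : List V) → (w : V) →
    List.Chain G.Adj u (L ++ [w]) → G.Walk u w
  | _, [], _, h => Walk.cons (List.chain_cons.mp h).1 Walk.nil
  | _, a :: L, w, h =>
    Walk.cons (List.chain_cons.mp h).1 (walkOf G a L w (List.chain_cons.mp h).2)

theorem walkOf_support (G : SimpleGraph V) : ∀ (u : V) (L : List V) (w : V)
    (h : List.Chain G.Adj u (L ++ [w])), (walkOf G u L w h).support = u :: (L ++ [w])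
  | _, [], _, _ => rfl
  | u, a :: L, w, h => by
    simp [walkOf, walkOf_support G a L w (List.chain_cons.mp h).2]

theorem walkOf_length (G : SimpleGraph V) : ∀ (u : V) (L : List V) (w : V)
    (h : List.Chain G.Adj u (L ++ [w])), (walkOf G u L w h).length = L.length + 1
  | _, [], _, _ => rfl
  | u, a :: L, w, h => by
    simp [walkOf, walkOf_length G a L w (List.chain_cons.mp h).2]

theorem walkOf_edges (G : SimpleGraph V) : ∀ (u : V) (L : List V) (w : V)
    (h : List.Chain G.Adj u (L ++ [w])),
    (walkOf G u L w h).edges = List.zipWith (fun a b => s(a, b)) (u :: L) (L ++ [w])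
  | _, [], _, _ => rfl
  | u, a :: L, w, h => by
    simp [walkOf, walkOf_edges G a L w (List.chain_cons.mp h).2]

theorem mem_zipWith' {α β γ : Type*} {f : α → β → γ} {c : γ} :
    ∀ {l1 : List α} {l2 : List β}, c ∈ List.zipWith f l1 l2 →
      ∃ k, ∃ h1 : k < l1.length, ∃ h2 : k < l2.length, c = f l1[k] l2[k]
  | [], _, h => by simp at h
  | _ :: _, [], h => by simp at h
  | a :: l1, b :: l2, h => by
    rw [List.zipWith_cons_cons, List.mem_cons] at h
    rcases h with h | h
    · exact ⟨0, by simp, by simp, by simpa using h⟩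
    · obtain ⟨k, h1, h2, hk⟩ := mem_zipWith' h
      exact ⟨k + 1, by simpa using h1, by simpa using h2, by simpa using hk⟩

theorem cycle_of_chain (G : SimpleGraph V) (u : V) (L : List V)
    (hch : List.Chain G.Adj u (L ++ [u])) (hnd : (u :: L).Nodup)
    (hlen : 2 ≤ L.length) : HasCycleLength G (L.length + 1) := by
  match L, hch, hnd, hlen with
  | a :: L', hch, hnd, hlen =>
    have hL' : L' ≠ [] := by
      intro h; subst h; simp at hlen
    have hadj : G.Adj u a := (List.chain_cons.mp hch).1
    have hch' : List.Chain G.Adj a (L' ++ [u]) := (List.chain_cons.mp hch).2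
    refine ⟨u, Walk.cons hadj (walkOf G a L' u hch'), ?_, ?_⟩
    · rw [Walk.cons_isCycle_iff]
      simp only [List.nodup_cons, List.mem_cons] at hnd
      constructor
      · rw [Walk.isPath_def, walkOf_support]
        simp only [List.nodup_cons] at hnd ⊢
        refine ⟨?_, ?_⟩
        · intro hmem
          rcases List.mem_append.mp hmem with h | h
          · exact hnd.2.1 h
          · exact hnd.1 (Or.inl (List.mem_singleton.mp h).symm)
        · rw [List.nodup_append]
          refine ⟨hnd.2.2, List.nodup_singleton u, ?_⟩
          intro b hb c hb' hbc
          rw [List.mem_singleton] at hb'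
          subst hb'
          subst hbc
          exact hnd.1 (Or.inr hb)
      · rw [walkOf_edges]
        intro hmem
        obtain ⟨k, h1, h2, hk⟩ := mem_zipWith' hmem
        simp only [List.length_cons] at h1
        have hne : ∀ m (hm : m < (a :: L').length), u ≠ (a :: L')[m] := by
          intro m hm heq
          exact hnd.1 (List.mem_cons.mp (heq ▸ List.getElem_mem hm))
        rcases Sym2.eq_iff.mp hk with ⟨hu, ha⟩ | ⟨hu, ha⟩
        · exact hne k (by simpa using h1) hu
        · -- hu : u = (L' ++ [u])[k], ha : a = (a :: L')[k]
          simp only [List.length_append, List.length_singleton] at h2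
          rcases Nat.lt_or_ge k L'.length with hk' | hk'
          · rw [List.getElem_append_left hk'] at hu
            exact hnd.1 (Or.inr (hu ▸ List.getElem_mem hk'))
          · have hkl : k = L'.length := by omega
            subst hkl
            have h0 : L'.length ≠ 0 := by
              intro h; exact hL' (List.length_eq_zero_iff.mp h)
            rw [List.getElem_cons] at ha
            rw [dif_neg h0] at ha
            have : a ∈ L' := ha ▸ List.getElem_mem (by omega)
            exact hnd.2.1 this
    · simp [walkOf_length]





theorem chain'_map_range {g : ℕ → V} {R : V → V → Prop} {n : ℕ}
    (h : ∀ t, t + 1 < n → R (g t) (g (t + 1))) :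
    List.Chain' R ((List.range n).map g) := by
  show List.IsChain R _
  rw [List.isChain_map]
  cases n with
  | zero => simp
  | succ m =>
    rw [List.isChain_range_succ]
    intro t ht
    exact h t (by omega)

theorem getLast?_map_range {g : ℕ → V} {n : ℕ} (h : 0 < n) :
    ((List.range n).map g).getLast? = some (g (n - 1)) := by
  cases n with
  | zero => omega
  | succ m => simp [List.range_succ]

theorem key (G : SimpleGraph V) (l : ℕ) (hl : 3 ≤ l) (v : ZMod l → V)
    (hinj : Function.Injective v)
    (hC : ∀ i : ZMod l, G.Adj (v i) (v (i + 1)))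
    (hmax : ∀ k : ℕ, HasCycleLength G k → k ≤ l)
    (x y : V) (hxy : x ≠ y)
    (hx : ∀ i : ZMod l, x ≠ v i) (hy : ∀ i : ZMod l, y ≠ v i)
    (i j : ZMod l) (hij : i ≠ j)
    (hxi : G.Adj x (v i)) (hxj : G.Adj x (v j))
    (hyi : G.Adj y (v (i + 1))) (hyj : G.Adj y (v (j + 1))) : False := by
  haveI : NeZero l := ⟨by omega⟩
  set d : ℕ := (j - i).val with hd
  have hdl : d < l := ZMod.val_lt _
  have hd1 : 1 ≤ d := by
    rcases Nat.eq_zero_or_pos d with h | h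
    · exact absurd (sub_eq_zero.mp ((ZMod.val_eq_zero _).mp h)) (Ne.symm hij)
    · exact h
  have hcast : ((d : ℕ) : ZMod l) = j - i := ZMod.natCast_zmod_val _
  set w : ℕ → V := fun t =>
    if t = 0 then x
    else if t ≤ l - d then v (i - ((t - 1 : ℕ) : ZMod l))
    else if t = l - d + 1 then y
    else v (i + 1 + ((t - (l - d + 2) : ℕ) : ZMod l)) with hw
  have hw0 : w 0 = x := by simp [hw]
  have hwB : ∀ t, 1 ≤ t → t ≤ l - d → w t = v (i - ((t - 1 : ℕ) : ZMod l)) := by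
    intro t h1 h2
    simp only [hw]
    rw [if_neg (by omega), if_pos h2]
  have hwy : w (l - d + 1) = y := by
    simp only [hw]
    rw [if_neg (by omega), if_neg (by omega)]
    simp
  have hwF : ∀ t, l - d + 2 ≤ t → w t = v (i + 1 + ((t - (l - d + 2) : ℕ) : ZMod l)) := by
    intro t h1
    simp only [hw]
    rw [if_neg (by omega), if_neg (by omega), if_neg (by omega)]
  -- key ZMod identities
  have hBlast : w (l - d) = v (j + 1) := by
    rw [hwB _ (by omega) le_rfl]
    congr 1
    have h1 : (l - d - 1 : ℕ) = l - (d + 1) := by omega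
    rw [h1, Nat.cast_sub (by omega : d + 1 ≤ l)]
    push_cast [ZMod.natCast_self, hcast]
    ring
  have hFlast : w (l + 1) = v j := by
    rw [hwF _ (by omega)]
    congr 1
    have h1 : (l + 1 - (l - d + 2) : ℕ) = d - 1 := by omega
    rw [h1, Nat.cast_sub hd1]
    push_cast [hcast]
    ring
  -- chain of adjacencies
  have hadjw : ∀ t, t + 1 < l + 2 → G.Adj (w t) (w (t + 1)) := by
    intro t ht
    rcases (by omega : t = 0 ∨ (1 ≤ t ∧ t + 1 ≤ l - d) ∨ t = l - d ∨ t = l - d + 1 ∨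
        (l - d + 2 ≤ t ∧ t ≤ l)) with h | h | h | h | h
    · subst h
      rw [hw0, hwB 1 le_rfl (by omega)]
      simpa using hxi
    · rw [hwB t h.1 (by omega), hwB (t + 1) (by omega) h.2]
      have h2 : ((t + 1 - 1 : ℕ) : ZMod l) = ((t - 1 : ℕ) : ZMod l) + 1 := by
        have : (t + 1 - 1 : ℕ) = (t - 1) + 1 := by omega
        rw [this]; push_cast; ring
      rw [h2]
      have h3 := hC (i - (((t + 1 - 1 : ℕ) : ZMod l)))
      rw [h2] at h3
      have h4 : i - (((t - 1 : ℕ) : ZMod l) + 1) + 1 = i - ((t - 1 : ℕ) : ZMod l) := by ring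
      rw [h4] at h3
      exact h3.symm
    · subst h
      rw [hBlast, hwy]
      exact hyj.symm
    · subst h
      rw [hwy]
      have : l - d + 1 + 1 = l - d + 2 := by omega
      rw [this, hwF _ le_rfl]
      simpa using hyi
    · rw [hwF t (by omega), hwF (t + 1) (by omega)]
      have h2 : ((t + 1 - (l - d + 2) : ℕ) : ZMod l) = ((t - (l - d + 2) : ℕ) : ZMod l) + 1 := by
        have : (t + 1 - (l - d + 2) : ℕ) = (t - (l - d + 2)) + 1 := by omega
        rw [this]; push_cast; ring
      rw [h2, ← add_assoc]
      exact hC _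
  -- injectivity on range (l+2)
  have castinj : ∀ a b : ℕ, a < l → b < l → ((a : ℕ) : ZMod l) = b → a = b := by
    intro a b ha hb h
    have := congrArg ZMod.val h
    rwa [ZMod.val_cast_of_lt ha, ZMod.val_cast_of_lt hb] at this
  have cross : ∀ a b : ℕ, a ≤ l - d - 1 → b ≤ d - 1 →
      i - ((a : ℕ) : ZMod l) ≠ i + 1 + ((b : ℕ) : ZMod l) := by
    intro a b ha hb heq
    have h0 : ((a + b + 1 : ℕ) : ZMod l) = 0 := by
      push_cast
      linear_combination -heq
    rw [ZMod.natCast_eq_zero_iff] at h0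
    have := Nat.le_of_dvd (by omega) h0
    omega
  have hinjw : ∀ s t, s < l + 2 → t < l + 2 → w s = w t → s = t := by
    have hreg : ∀ t, t < l + 2 → t = 0 ∨ (1 ≤ t ∧ t ≤ l - d) ∨ t = l - d + 1 ∨
        (l - d + 2 ≤ t ∧ t ≤ l + 1) := by intro t ht; omega
    intro s t hs ht heq
    rcases hreg s hs with h1 | h1 | h1 | h1 <;> rcases hreg t ht with h2 | h2 | h2 | h2
    · omega
    · subst h1; rw [hw0, hwB t h2.1 h2.2] at heq; exact absurd heq (hx _)
    · subst h1; subst h2; rw [hw0, hwy] at heq; exact absurd heq hxy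
    · subst h1; rw [hw0, hwF t (by omega)] at heq; exact absurd heq (hx _)
    · subst h2; rw [hw0, hwB s h1.1 h1.2] at heq; exact absurd heq.symm (hx _)
    · rw [hwB s h1.1 h1.2, hwB t h2.1 h2.2] at heq
      have h3 := hinj heq
      have h4 : ((s - 1 : ℕ) : ZMod l) = ((t - 1 : ℕ) : ZMod l) := by
        linear_combination -h3
      have := castinj _ _ (by omega) (by omega) h4
      omega
    · subst h2; rw [hwB s h1.1 h1.2, hwy] at heq; exact absurd heq.symm (hy _)
    · rw [hwB s h1.1 h1.2, hwF t (by omega)] at heq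
      exact absurd (hinj heq) (cross _ _ (by omega) (by omega))
    · subst h1; subst h2; rw [hwy, hw0] at heq; exact absurd heq.symm hxy
    · subst h1; rw [hwy, hwB t h2.1 h2.2] at heq; exact absurd heq (hy _)
    · omega
    · subst h1; rw [hwy, hwF t (by omega)] at heq; exact absurd heq (hy _)
    · subst h2; rw [hw0, hwF s (by omega)] at heq; exact absurd heq.symm (hx _)
    · rw [hwF s (by omega), hwB t h2.1 h2.2] at heq
      exact absurd (hinj heq).symm (cross _ _ (by omega) (by omega))
    · subst h2; rw [hwy, hwF s (by omega)] at heq; exact absurd heq.symm (hy _)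
    · rw [hwF s (by omega), hwF t (by omega)] at heq
      have h3 := add_left_cancel (hinj heq)
      have := castinj _ _ (by omega) (by omega) h3
      omega
  -- assemble the cycle
  set L : List V := (List.range (l + 1)).map (fun t => w (t + 1)) with hL
  have hxL : x :: L = (List.range (l + 2)).map w := by
    rw [show l + 2 = (l + 1) + 1 from rfl, List.range_succ_eq_map]
    simp only [List.map_cons, List.map_map, hw0, hL]
    congr 1
  have hch' : List.Chain' G.Adj ((List.range (l + 2)).map w ++ [x]) := by
    apply List.IsChain.append (chain'_map_range hadjw) (List.isChain_singleton x)
    intro a ha b hb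
    rw [getLast?_map_range (by omega)] at ha
    simp only [List.head?_cons, Option.mem_some_iff] at ha hb
    subst ha; subst hb
    have : l + 2 - 1 = l + 1 := by omega
    rw [this, hFlast]
    exact hxj.symm
  have hch : List.Chain G.Adj x (L ++ [x]) := by
    have h5 : List.Chain' G.Adj ((x :: L) ++ [x]) := by rw [hxL]; exact hch'
    exact h5
  have hnd : (x :: L).Nodup := by
    rw [hxL]
    apply List.Nodup.map_on _ List.nodup_range
    intro s hs t ht heq
    exact hinjw s t (by simpa using hs) (by simpa using ht) heq
  have hlenL : L.length = l + 1 := by simp [hL]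
  have := hmax (L.length + 1) (cycle_of_chain G x L hch hnd (by omega))
  omega


end ShiftedAux

/-- If `C = v_1 v_2 ⋯ v_l v_1` is a cycle of maximum length in `G`, `x, y` are
distinct vertices off `C`, and `x` is adjacent to `v_i` and `v_j` with `i ≠ j`,
then `y` is not adjacent to both `v_{i+1}` and `v_{j+1}`, nor to both `v_{i-1}`
and `v_{j-1}`. -/
theorem shifted_neighbors_off_longest_cycle {V : Type*} (G : SimpleGraph V)
    (l : ℕ) (hl : 3 ≤ l) (v : ZMod l → V) (hinj : Function.Injective v)
    (hC : ∀ i : ZMod l, G.Adj (v i) (v (i + 1)))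
    (hmax : ∀ k : ℕ, HasCycleLength G k → k ≤ l)
    (x y : V) (hxy : x ≠ y)
    (hx : ∀ i : ZMod l, x ≠ v i) (hy : ∀ i : ZMod l, y ≠ v i)
    (i j : ZMod l) (hij : i ≠ j)
    (hxi : G.Adj x (v i)) (hxj : G.Adj x (v j)) :
    ¬ (G.Adj y (v (i + 1)) ∧ G.Adj y (v (j + 1))) ∧
    ¬ (G.Adj y (v (i - 1)) ∧ G.Adj y (v (j - 1))) := by
  constructor
  · rintro ⟨hyi, hyj⟩
    exact ShiftedAux.key G l hl v hinj hC hmax x y hxy hx hy i j hij hxi hxj hyi hyj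
  · rintro ⟨hyi, hyj⟩
    have hinj' : Function.Injective (fun t : ZMod l => v (-t)) :=
      fun a b h => neg_injective (hinj h)
    have hC' : ∀ t : ZMod l, G.Adj (v (-t)) (v (-(t + 1))) := by
      intro t
      have h := (hC (-t - 1)).symm
      have e1 : -t - 1 + 1 = -t := by ring
      have e2 : -(t + 1) = -t - 1 := by ring
      rw [e1] at h
      rw [e2]
      exact h
    refine ShiftedAux.key G l hl (fun t => v (-t)) hinj' hC' hmax x y hxy
      (fun t => hx (-t)) (fun t => hy (-t)) (-i) (-j)
      (fun h => hij (neg_injective h)) ?_ ?_ ?_ ?_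
    · simpa using hxi
    · simpa using hxj
    · show G.Adj y (v (-(-i + 1)))
      rw [show -(-i + 1) = i - 1 by ring]
      exact hyi
    · show G.Adj y (v (-(-j + 1)))
      rw [show -(-j + 1) = j - 1 by ring]
      exact hyj
end

section
/- Let G be a simple graph and let C = v_1 v_2 ⋯ v_l v_1 be a cycle of maximum length l in G (indices taken modulo l). Let x and y be two distinct vertices of G not lying on C, and suppose x is adjacent in G to v_i and v_j with i ≠ j (mod l). Then y is not adjacent in G to both v_{i+1} and v_{j+2}, and y is not adjacent in G to both v_{i-1} and v_{j-2}. -/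
open SimpleGraph

def pathAlong {V : Type*} {G : SimpleGraph V} {l : ℕ} {v : ZMod l → V}
    (hC : ∀ i : ZMod l, G.Adj (v i) (v (i + 1))) (a : ZMod l) :
    (n : ℕ) → G.Walk (v a) (v (a + n))
  | 0 => Walk.nil.copy rfl (by norm_num)
  | n+1 => ((pathAlong hC a n).concat (hC (a + n))).copy rfl (by push_cast; ring_nf)

lemma pathAlong_length {V : Type*} {G : SimpleGraph V} {l : ℕ} {v : ZMod l → V}
    (hC : ∀ i : ZMod l, G.Adj (v i) (v (i + 1))) (a : ZMod l) (n : ℕ) :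
    (pathAlong hC a n).length = n := by
  induction n with
  | zero => simp [pathAlong]
  | succ n ih => simp [pathAlong, ih]

lemma pathAlong_support {V : Type*} {G : SimpleGraph V} {l : ℕ} {v : ZMod l → V}
    (hC : ∀ i : ZMod l, G.Adj (v i) (v (i + 1))) (a : ZMod l) (n : ℕ) :
    (pathAlong hC a n).support = (List.range (n+1)).map (fun k : ℕ => v (a + (k : ZMod l))) := by
  induction n with
  | zero =>
      simp only [pathAlong, Walk.support_copy, Walk.support_nil,         List.map_cons, List.map_nil]
      rw [List.range_succ, List.range_zero]
      norm_num
  | succ n ih =>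
      simp only [pathAlong, Walk.support_copy, Walk.support_concat, ih, List.range_succ,
        List.map_append, List.map_cons, List.map_nil, List.concat_eq_append]
      push_cast
      rw [add_assoc]

lemma pathAlong_edges {V : Type*} {G : SimpleGraph V} {l : ℕ} {v : ZMod l → V}
    (hC : ∀ i : ZMod l, G.Adj (v i) (v (i + 1))) (a : ZMod l) (n : ℕ) :
    ∀ e ∈ (pathAlong hC a n).edges, ∃ b : ZMod l, e = s(v b, v (b+1)) := by
  induction n with
  | zero => simp [pathAlong]
  | succ n ih =>
      intro e he
      simp only [pathAlong, Walk.edges_copy, Walk.edges_concat, List.concat_eq_append,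
        List.mem_append, List.mem_singleton] at he
      rcases he with he | he
      · exact ih e he
      · exact ⟨a + n, he⟩

lemma cast_inj_small {l : ℕ} {p q : ℕ} (hp : p < l) (hq : q < l)
    (h : (p : ZMod l) = q) : p = q := by
  have h2 : (p : ZMod l).val = (q : ZMod l).val := by rw [h]
  rwa [ZMod.val_cast_of_lt hp, ZMod.val_cast_of_lt hq] at h2

lemma v_arc_inj {V : Type*} {l : ℕ} {v : ZMod l → V} (hinj : Function.Injective v)
    (a : ZMod l) {p q : ℕ} (hp : p < l) (hq : q < l)
    (h : v (a + p) = v (a + q)) : p = q := by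
  have h2 : a + (p : ZMod l) = a + q := hinj h
  exact cast_inj_small hp hq (by exact add_left_cancel h2)

theorem aux_one {V : Type*} (G : SimpleGraph V)
    (l : ℕ) (hl : 3 ≤ l) (v : ZMod l → V) (hinj : Function.Injective v)
    (hC : ∀ i : ZMod l, G.Adj (v i) (v (i + 1)))
    (hmax : ∀ k : ℕ, HasCycleLength G k → k ≤ l)
    (x y : V) (hxy : x ≠ y)
    (hx : ∀ i : ZMod l, x ≠ v i) (hy : ∀ i : ZMod l, y ≠ v i)
    (i j : ZMod l) (hij : i ≠ j)
    (hxi : G.Adj x (v i)) (hxj : G.Adj x (v j)) :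
    ¬ (G.Adj y (v (i + 1)) ∧ G.Adj y (v (j + 2))) := by
  haveI : NeZero l := ⟨by omega⟩
  rintro ⟨hy1, hy2⟩
  set m : ℕ := (j - (i + 1)).val with hm_def
  have hm_lt : m < l := ZMod.val_lt _
  have hmcast : ((m : ℕ) : ZMod l) = j - (i + 1) := ZMod.natCast_rightInverse _
  have hjm : j = i + 1 + (m : ZMod l) := by rw [hmcast]; ring
  have hm_ne : m ≠ l - 1 := by
    intro h
    apply hij
    have h1 : ((l - 1 : ℕ) : ZMod l) = -1 := by
      rw [Nat.cast_sub (by omega), ZMod.natCast_self]; push_cast; ring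
    have : j = i := by rw [hjm, h, h1]; ring
    exact this.symm
  by_cases hcase : m = l - 2
  · -- j = i - 1 : cycle x, v i, v (i+1), ..., v (i-1) = v j, x of length l+1
    have hend : v (i + ((l - 1 : ℕ) : ZMod l)) = v j := by
      congr 1
      have h1 : ((l - 1 : ℕ) : ZMod l) = -1 := by
        rw [Nat.cast_sub (by omega), ZMod.natCast_self]; push_cast; ring
      have h2 : ((l - 2 : ℕ) : ZMod l) = -2 := by
        rw [Nat.cast_sub (by omega), ZMod.natCast_self]; push_cast; ring
      rw [h1, hjm, hcase, h2]; ring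
    have hadj : G.Adj (v (i + ((l - 1 : ℕ) : ZMod l))) x := by rw [hend]; exact hxj.symm
    set C' : G.Walk x x := SimpleGraph.Walk.cons hxi ((pathAlong hC i (l-1)).concat hadj)
      with hC'_def
    have hcyc : C'.IsCycle := by
      rw [hC'_def, Walk.cons_isCycle_iff]
      constructor
      · rw [Walk.isPath_def, Walk.support_concat, pathAlong_support,
          List.nodup_append]
        refine ⟨?_, List.nodup_singleton _, ?_⟩
        · refine List.Nodup.map_on ?_ (List.nodup_range)
          intro p hp q hq hpq
          rw [List.mem_range] at hp hq
          exact v_arc_inj hinj i (by omega) (by omega) hpq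
        · intro a ha
          simp only [List.mem_map, List.mem_range] at ha
          obtain ⟨k, _, rfl⟩ := ha
          simp only [List.mem_singleton]
          rintro b rfl h
          exact hx _ h.symm
      · intro hmem
        rw [Walk.edges_concat, List.concat_eq_append, List.mem_append] at hmem
        rcases hmem with hmem | hmem
        · obtain ⟨b, hb⟩ := pathAlong_edges hC i (l-1) _ hmem
          rw [Sym2.eq_iff] at hb
          rcases hb with ⟨h1, _⟩ | ⟨h1, _⟩ <;> exact hx _ h1
        · rw [List.mem_singleton, Sym2.eq_iff] at hmem
          rcases hmem with ⟨h1, _⟩ | ⟨_, h2⟩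
          · exact hx _ h1
          · rw [hend] at h2; exact hij (hinj h2)
    have hlen : C'.length = l + 1 := by
      rw [hC'_def]
      simp only [Walk.length_cons, Walk.length_concat, pathAlong_length]
      omega
    have := hmax (l+1) ⟨x, C', hcyc, hlen⟩
    omega
  · -- main case : m ≤ l - 3
    have hm3 : m ≤ l - 3 := by omega
    have hRend : v (i + 1 + (m : ZMod l)) = v j := congrArg v hjm.symm
    have hTend : v (j + 2 + ((l - 3 - m : ℕ) : ZMod l)) = v i := by
      congr 1
      have key : ((m : ZMod l) + 3 + ((l - 3 - m : ℕ) : ZMod l)) = 0 := by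
        have h0 : ((m + 3 + (l - 3 - m) : ℕ) : ZMod l) = 0 := by
          rw [show m + 3 + (l - 3 - m) = l by omega]; exact ZMod.natCast_self l
        push_cast at h0
        linear_combination h0
      rw [hjm]
      linear_combination key
    have hadjT : G.Adj (v (j + 2 + ((l - 3 - m : ℕ) : ZMod l))) x := by
      rw [hTend]; exact hxi.symm
    set R : G.Walk (v j) (v (i + 1)) :=
      (pathAlong hC (i+1) m).reverse.copy hRend rfl with hR_def
    set T : G.Walk (v (j + 2)) (v (j + 2 + ((l - 3 - m : ℕ) : ZMod l))) :=
      pathAlong hC (j+2) (l-3-m) with hT_def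
    set S : G.Walk (v (i + 1)) x :=
      SimpleGraph.Walk.cons hy1.symm (SimpleGraph.Walk.cons hy2 (T.concat hadjT)) with hS_def
    set P : G.Walk (v j) x := R.append S with hP_def
    set Q : G.Walk x x := SimpleGraph.Walk.cons hxj P with hQ_def
    have hcyc : Q.IsCycle := by
      rw [hQ_def, Walk.cons_isCycle_iff]
      constructor
      · rw [Walk.isPath_def, hP_def, Walk.support_append, hR_def, hS_def,
          Walk.support_copy, Walk.support_reverse, pathAlong_support,
          Walk.support_cons, Walk.support_cons, Walk.support_concat,
          pathAlong_support, List.tail_cons]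
        rw [List.nodup_append]
        refine ⟨List.nodup_reverse.2 ?_, ?_, ?_⟩
        · refine List.Nodup.map_on ?_ (List.nodup_range)
          intro p hp q hq hpq
          rw [List.mem_range] at hp hq
          exact v_arc_inj hinj (i+1) (by omega) (by omega) hpq
        · rw [List.nodup_cons, List.nodup_append]
          refine ⟨?_, ?_, List.nodup_singleton _, ?_⟩
          · intro hmem
            rw [List.mem_append] at hmem
            rcases hmem with hmem | hmem
            · simp only [List.mem_map, List.mem_range] at hmem
              obtain ⟨k, _, hk⟩ := hmem
              exact hy _ hk.symm
            · rw [List.mem_singleton] at hmem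
              exact hxy hmem.symm
          · refine List.Nodup.map_on ?_ (List.nodup_range)
            intro p hp q hq hpq
            rw [List.mem_range] at hp hq
            exact v_arc_inj hinj (j+2) (by omega) (by omega) hpq
          · intro a ha
            simp only [List.mem_map, List.mem_range] at ha
            obtain ⟨k, _, rfl⟩ := ha
            simp only [List.mem_singleton]
            rintro b rfl h
            exact hx _ h.symm
        · intro a ha
          rw [List.mem_reverse] at ha
          simp only [List.mem_map, List.mem_range] at ha
          obtain ⟨k, hk, rfl⟩ := ha
          intro b hb hb'
          subst hb'
          rw [List.mem_cons, List.mem_append, List.mem_singleton] at hb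
          rcases hb with h | hmem | h
          · exact hy _ h.symm
          swap
          · exact hx _ h.symm
          simp only [List.mem_map, List.mem_range] at hmem
          obtain ⟨k', hk', hkk'⟩ := hmem
          have harc : j + 2 + (k' : ZMod l) = i + 1 + ((m + 2 + k' : ℕ) : ZMod l) := by
            rw [hjm]; push_cast; ring
          rw [harc] at hkk'
          have := v_arc_inj hinj (i+1) (by omega) (by omega) hkk'.symm
          omega
      · intro hmem
        rw [hP_def, Walk.edges_append, hR_def, hS_def, Walk.edges_copy,
          Walk.edges_reverse, Walk.edges_cons, Walk.edges_cons, Walk.edges_concat,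
          List.concat_eq_append, List.mem_append, List.mem_reverse] at hmem
        rcases hmem with hmem | hmem
        · obtain ⟨b, hb⟩ := pathAlong_edges hC (i+1) m _ hmem
          rw [Sym2.eq_iff] at hb
          rcases hb with ⟨h1, _⟩ | ⟨h1, _⟩ <;> exact hx _ h1
        · rw [List.mem_cons, List.mem_cons, List.mem_append, List.mem_singleton] at hmem
          rcases hmem with hmem | hmem | hmem | hmem
          · rw [Sym2.eq_iff] at hmem
            rcases hmem with ⟨h1, _⟩ | ⟨h1, _⟩
            · exact hx _ h1
            · exact hxy h1
          · rw [Sym2.eq_iff] at hmem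
            rcases hmem with ⟨h1, _⟩ | ⟨h1, _⟩
            · exact hxy h1
            · exact hx _ h1
          · obtain ⟨b, hb⟩ := pathAlong_edges hC (j+2) (l-3-m) _ hmem
            rw [Sym2.eq_iff] at hb
            rcases hb with ⟨h1, _⟩ | ⟨h1, _⟩ <;> exact hx _ h1
          · rw [Sym2.eq_iff] at hmem
            rcases hmem with ⟨h1, _⟩ | ⟨_, h2⟩
            · exact hx _ h1
            · rw [hTend] at h2; exact hij (hinj h2).symm
    have hlen : Q.length = l + 1 := by
      rw [hQ_def, hP_def, hR_def, hS_def, hT_def]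
      simp only [Walk.length_cons, Walk.length_append, Walk.length_copy,
        Walk.length_reverse, Walk.length_concat, pathAlong_length]
      omega
    have := hmax (l+1) ⟨x, Q, hcyc, hlen⟩
    omega

/-- If `C = v_1 v_2 ⋯ v_l v_1` is a cycle of maximum length in `G`, `x, y` are
distinct vertices off `C`, and `x` is adjacent to `v_i` and `v_j` with `i ≠ j`,
then `y` is not adjacent to both `v_{i+1}` and `v_{j+2}`, nor to both `v_{i-1}`
and `v_{j-2}`. -/
theorem doubly_shifted_neighbors_off_longest_cycle {V : Type*} (G : SimpleGraph V)
    (l : ℕ) (hl : 3 ≤ l) (v : ZMod l → V) (hinj : Function.Injective v)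
    (hC : ∀ i : ZMod l, G.Adj (v i) (v (i + 1)))
    (hmax : ∀ k : ℕ, HasCycleLength G k → k ≤ l)
    (x y : V) (hxy : x ≠ y)
    (hx : ∀ i : ZMod l, x ≠ v i) (hy : ∀ i : ZMod l, y ≠ v i)
    (i j : ZMod l) (hij : i ≠ j)
    (hxi : G.Adj x (v i)) (hxj : G.Adj x (v j)) :
    ¬ (G.Adj y (v (i + 1)) ∧ G.Adj y (v (j + 2))) ∧
    ¬ (G.Adj y (v (i - 1)) ∧ G.Adj y (v (j - 2))) := by
  constructor
  · exact aux_one G l hl v hinj hC hmax x y hxy hx hy i j hij hxi hxj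
  · set w : ZMod l → V := fun k => v (-k) with hw_def
    have hwinj : Function.Injective w := fun a b h => neg_injective (hinj h)
    have hwC : ∀ k : ZMod l, G.Adj (w k) (w (k + 1)) := by
      intro k
      have h := (hC (-(k+1))).symm
      have h1 : -(k+1) + 1 = -k := by ring
      rw [h1] at h
      exact h
    have := aux_one G l hl w hwinj hwC hmax x y hxy (fun k => hx (-k)) (fun k => hy (-k))
      (-i) (-j) (fun h => hij (neg_injective h))
      (by simpa [hw_def] using hxi) (by simpa [hw_def] using hxj)
    intro ⟨h1, h2⟩
    apply this
    constructor
    · show G.Adj y (v (-(-i + 1)))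
      rw [show -(-i + 1) = i - 1 by ring]
      exact h1
    · show G.Adj y (v (-(-j + 2)))
      rw [show -(-j + 2) = j - 2 by ring]
      exact h2
end

section
/- Let m ≥ 3 be an integer and let n ≥ m+2 be an integer such that n is not of the form q(m+1)-2, q(m+1)-1, or q(m+1) for any integer q ≥ 2. Then there exists a simple graph G on n+m+1 vertices such that G contains no subgraph isomorphic to K_{2,n} and the complement of G contains no cycle of length 2m; in particular R(K_{2,n}, C_{2m}) > n+m+1. -/
section Aux

lemma walk_same_color' {V : Type*} (c : V → ℕ) {H : SimpleGraph V}
    (hH : ∀ u v, H.Adj u v → c u = 0 ∨ c v = 0 ∨ c u = c v)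
    {a b : V} (p : H.Walk a b) (h0 : ∀ v ∈ p.support, c v ≠ 0) :
    ∀ v ∈ p.support, c v = c a := by
  induction p with
  | nil =>
    intro v hv
    rw [SimpleGraph.Walk.support_nil, List.mem_singleton] at hv
    subst hv; rfl
  | @cons a a' b hadj q ih =>
    intro v hv
    rw [SimpleGraph.Walk.support_cons, List.mem_cons] at hv
    have h0' : ∀ w ∈ q.support, c w ≠ 0 := fun w hw =>
      h0 w (by rw [SimpleGraph.Walk.support_cons]; exact List.mem_cons_of_mem _ hw)
    have haa' : c a' = c a := by
      have h1 : c a ≠ 0 :=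
        h0 a (by rw [SimpleGraph.Walk.support_cons]; exact List.mem_cons_self)
      have h2 : c a' ≠ 0 := h0' a' q.start_mem_support
      rcases hH a a' hadj with h | h | h
      · exact absurd h h1
      · exact absurd h h2
      · exact h.symm
    rcases hv with rfl | hv
    · rfl
    · rw [ih h0' v hv, haa']

lemma cycle_tail_walk {V : Type*} {H : SimpleGraph V} {v : V} (C : H.Walk v v)
    (hC : C.IsCycle) :
    ∃ (u : V) (p : H.Walk u v), p.support = C.support.tail ∧ p.length + 1 = C.length := by
  cases C with
  | nil => exact absurd rfl hC.ne_nil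
  | cons h q => exact ⟨_, q, by simp, by simp⟩

lemma key_arith (m n : ℕ) (hm : 3 ≤ m) (hn : m + 2 ≤ n)
    (hexc : ∀ q : ℕ, 2 ≤ q →
      n ≠ q * (m + 1) - 2 ∧ n ≠ q * (m + 1) - 1 ∧ n ≠ q * (m + 1)) :
    ∃ K r : ℕ, 1 ≤ K ∧ 1 ≤ r ∧ r + 2 ≤ m ∧ n + m + 1 = (K + 1) * (m + 1) + r := by
  set N := n + m + 1 with hNdef
  set q0 := N / (m + 1) with hq0
  set r := N % (m + 1) with hr
  have hdiv : (m + 1) * q0 + r = N := Nat.div_add_mod N (m + 1)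
  have hrlt : r < m + 1 := Nat.mod_lt _ (by omega)
  have hq0ge : 2 ≤ q0 := by
    by_contra h
    have h1 : q0 ≤ 1 := by omega
    have : (m + 1) * q0 ≤ (m + 1) * 1 := Nat.mul_le_mul_left _ h1
    omega
  have hr0 : r ≠ 0 := by
    intro h0
    have hq3 : 3 ≤ q0 := by
      by_contra h
      have h1 : q0 ≤ 2 := by omega
      have : (m + 1) * q0 ≤ (m + 1) * 2 := Nat.mul_le_mul_left _ h1
      omega
    have hne := (hexc (q0 - 1) (by omega)).2.2
    apply hne
    have h2 : (q0 - 1) * (m + 1) = q0 * (m + 1) - 1 * (m + 1) := Nat.sub_mul q0 1 (m + 1)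
    have h3 : (m + 1) * q0 = q0 * (m + 1) := Nat.mul_comm _ _
    omega
  have hrm : r ≠ m := by
    intro h0
    have hne := (hexc q0 (by omega)).2.1
    apply hne
    have h2 : (m + 1) * q0 = q0 * (m + 1) := Nat.mul_comm _ _
    have h3 : 0 < q0 * (m + 1) := by positivity
    omega
  have hrm1 : r ≠ m - 1 := by
    intro h0
    have hne := (hexc q0 (by omega)).1
    apply hne
    have h2 : (m + 1) * q0 = q0 * (m + 1) := Nat.mul_comm _ _
    have h3 : 2 ≤ q0 * (m + 1) := by nlinarith
    omega
  refine ⟨q0 - 1, r, by omega, by omega, by omega, ?_⟩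
  have h4 : q0 - 1 + 1 = q0 := by omega
  rw [h4]
  have h3 : (m + 1) * q0 = q0 * (m + 1) := Nat.mul_comm _ _
  omega

open Fin.NatCast in
lemma classA (m K r N : ℕ) (hm : 3 ≤ m) (hK : 1 ≤ K) (hr1 : 1 ≤ r) (hr2 : r + 2 ≤ m)
    (hN : N = (K+1)*(m+1)+r) (c : Fin N → ℕ)
    (hc : ∀ v : Fin N, c v = if v.val = 0 then 0 else min ((v.val-1)/(m+1)) K + 1)
    (i : ℕ) (hi : i ≤ K) :
    m + 1 ≤ (Finset.univ.filter fun v : Fin N => c v = i + 1).card := by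
  have hNpos : 0 < N := by subst hN; positivity
  haveI : NeZero N := ⟨by omega⟩
  have hmul : i * (m+1) ≤ K * (m+1) := Nat.mul_le_mul_right _ hi
  have e1 : (K+1)*(m+1) = K*(m+1) + (m+1) := by ring
  have e2 : (i+1)*(m+1) = i*(m+1) + (m+1) := by ring
  have hlt : ∀ x ∈ Finset.Ico (i*(m+1)+1) (i*(m+1)+m+2), x < N := by
    intro x hx
    rw [Finset.mem_Ico] at hx
    omega
  have hcard : (Finset.Ico (i*(m+1)+1) (i*(m+1)+m+2)).card = m + 1 := by
    rw [Nat.card_Ico]; omega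
  rw [← hcard]
  refine Finset.card_le_card_of_injOn (fun x => (x : Fin N)) ?_ ?_
  · intro x hx
    have hxN := hlt x hx
    rw [Finset.mem_coe, Finset.mem_Ico] at hx
    have hval : ((x : Fin N) : ℕ) = x := by
      rw [Fin.val_natCast]; exact Nat.mod_eq_of_lt hxN
    simp only [Finset.mem_coe, Finset.mem_filter, Finset.mem_univ, true_and]
    rw [hc, hval, if_neg (by omega)]
    have hdiv : (x - 1) / (m+1) = i := Nat.div_eq_of_lt_le (by omega) (by omega)
    rw [hdiv, Nat.min_eq_left hi]
  · intro x hx y hy hxy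
    simp only [Finset.coe_Ico, Set.mem_Ico] at hx hy
    have hx' : x < N := by omega
    have hy' : y < N := by omega
    have h2 : ((x : Fin N) : ℕ) = ((y : Fin N) : ℕ) := congrArg Fin.val hxy
    rwa [Fin.val_natCast, Fin.val_natCast, Nat.mod_eq_of_lt hx', Nat.mod_eq_of_lt hy'] at h2

lemma classB (m K r N : ℕ) (hm : 3 ≤ m) (hK : 1 ≤ K) (hr1 : 1 ≤ r) (hr2 : r + 2 ≤ m)
    (hN : N = (K+1)*(m+1)+r) (c : Fin N → ℕ)
    (hc : ∀ v : Fin N, c v = if v.val = 0 then 0 else min ((v.val-1)/(m+1)) K + 1)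
    (i : ℕ) (hi : i ≤ K) :
    (Finset.univ.filter fun v : Fin N => c v = i + 1).card ≤ 2*m - 2 := by
  have hmem : ∀ v : Fin N, c v = i + 1 → v.val ≠ 0 ∧ min ((v.val-1)/(m+1)) K = i := by
    intro v hv
    rw [hc] at hv
    by_cases h0 : v.val = 0
    · rw [if_pos h0] at hv; omega
    · rw [if_neg h0] at hv; exact ⟨h0, by omega⟩
  rcases Nat.lt_or_ge i K with hiK | hiK
  · calc (Finset.univ.filter fun v : Fin N => c v = i + 1).card
        ≤ (Finset.Ico (i*(m+1)+1) (i*(m+1)+m+2)).card := by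
          refine Finset.card_le_card_of_injOn Fin.val ?_ Fin.val_injective.injOn
          intro v hv
          rw [Finset.mem_coe, Finset.mem_filter] at hv
          obtain ⟨h0, hmin⟩ := hmem v hv.2
          have hdi : (v.val-1)/(m+1) = i := by
            rcases Nat.le_total ((v.val-1)/(m+1)) K with h | h
            · rw [Nat.min_eq_left h] at hmin; exact hmin
            · rw [Nat.min_eq_right h] at hmin; omega
          have hdm := Nat.div_add_mod (v.val - 1) (m+1)
          have hs : (v.val - 1) % (m+1) < m+1 := Nat.mod_lt _ (by omega)
          rw [hdi] at hdm
          have e2 : (m+1)*i = i*(m+1) := Nat.mul_comm _ _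
          rw [Finset.mem_coe, Finset.mem_Ico]
          omega
      _ ≤ 2*m - 2 := by rw [Nat.card_Ico]; omega
  · have hiK' : i = K := by omega
    subst hiK'
    have e3 : (i+1)*(m+1) = i*(m+1)+(m+1) := by ring
    have hNe : N = i*(m+1)+(m+1)+r := by omega
    calc (Finset.univ.filter fun v : Fin N => c v = i + 1).card
        ≤ (Finset.Ico (i*(m+1)+1) N).card := by
          refine Finset.card_le_card_of_injOn Fin.val ?_ Fin.val_injective.injOn
          intro v hv
          rw [Finset.mem_coe, Finset.mem_filter] at hv
          obtain ⟨h0, hmin⟩ := hmem v hv.2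
          have hdK : i ≤ (v.val-1)/(m+1) := by
            rcases Nat.le_total ((v.val-1)/(m+1)) i with h | h
            · rw [Nat.min_eq_left h] at hmin; omega
            · exact h
          have hdm := Nat.div_add_mod (v.val - 1) (m+1)
          have hmul2 : (m+1)*i ≤ (m+1)*((v.val-1)/(m+1)) := Nat.mul_le_mul_left _ hdK
          have e2 : (m+1)*i = i*(m+1) := Nat.mul_comm _ _
          have hvN : v.val < N := v.isLt
          rw [Finset.mem_coe, Finset.mem_Ico]
          omega
      _ ≤ 2*m - 2 := by rw [Nat.card_Ico]; omega

end Aux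

/-- For `m ≥ 3` and `n ≥ m + 2` not of the form `q(m+1) - 2`, `q(m+1) - 1` or
`q(m+1)` for any `q ≥ 2`, there is a `K_{2,n}`-free graph on `n + m + 1`
vertices whose complement has no cycle of length `2m`; in particular
`R(K_{2,n}, C_{2m}) > n + m + 1`. -/
theorem ramsey_badness_generic (m n : ℕ) (hm : 3 ≤ m) (hn : m + 2 ≤ n)
    (hexc : ∀ q : ℕ, 2 ≤ q →
      n ≠ q * (m + 1) - 2 ∧ n ≠ q * (m + 1) - 1 ∧ n ≠ q * (m + 1)) :
    ∃ G : SimpleGraph (Fin (n + m + 1)),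
      ¬ Contains G (completeBipartiteGraph (Fin 2) (Fin n)) ∧
      ¬ HasCycleLength Gᶜ (2 * m) := by
  obtain ⟨K, r, hK, hr1, hr2, hNeq⟩ := key_arith m n hm hn hexc
  let c : Fin (n + m + 1) → ℕ :=
    fun v => if v.val = 0 then 0 else min ((v.val - 1) / (m + 1)) K + 1
  have hc : ∀ v : Fin (n + m + 1),
      c v = if v.val = 0 then 0 else min ((v.val - 1) / (m + 1)) K + 1 := fun _ => rfl
  let hub : Fin (n + m + 1) := ⟨0, by omega⟩
  have hchub : c hub = 0 := by rw [hc]; rfl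
  have hc0 : ∀ w : Fin (n + m + 1), c w = 0 → w = hub := by
    intro w hw
    rw [hc] at hw
    by_cases h0 : w.val = 0
    · exact Fin.ext h0
    · rw [if_neg h0] at hw; exact absurd hw (Nat.succ_ne_zero _)
  have hcval : ∀ w : Fin (n + m + 1), c w ≠ 0 → w.val ≠ 0 ∧ c w = (c w - 1) + 1 ∧ c w - 1 ≤ K := by
    intro w hw
    have h0 : w.val ≠ 0 := by
      intro h; apply hw; rw [hc, if_pos h]
    refine ⟨h0, by omega, ?_⟩
    rw [hc, if_neg h0]
    have := Nat.min_le_right ((w.val - 1) / (m + 1)) K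
    omega
  have hA : ∀ w : Fin (n + m + 1), c w ≠ 0 →
      m + 1 ≤ (Finset.univ.filter fun v => c v = c w).card := by
    intro w hw
    obtain ⟨-, he, hle⟩ := hcval w hw
    have := classA m K r (n + m + 1) hm hK hr1 hr2 hNeq c hc (c w - 1) hle
    rw [← he] at this
    exact this
  have hB : ∀ w : Fin (n + m + 1), c w ≠ 0 →
      (Finset.univ.filter fun v => c v = c w).card ≤ 2 * m - 2 := by
    intro w hw
    obtain ⟨-, he, hle⟩ := hcval w hw
    have := classB m K r (n + m + 1) hm hK hr1 hr2 hNeq c hc (c w - 1) hle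
    rw [← he] at this
    exact this
  refine ⟨{ Adj := fun u v => c u ≠ 0 ∧ c v ≠ 0 ∧ c u ≠ c v
            symm := ⟨fun u v ⟨h1, h2, h3⟩ => ⟨h2, h1, h3.symm⟩⟩
            loopless := ⟨fun v h => h.2.2 rfl⟩ }, ?_, ?_⟩
  · -- no K_{2,n}
    rintro ⟨f, hf⟩
    have hadj : ∀ j : Fin n, c (f (Sum.inl 0)) ≠ 0 ∧ c (f (Sum.inr j)) ≠ 0 ∧
        c (f (Sum.inl 0)) ≠ c (f (Sum.inr j)) := by
      intro j
      exact f.map_adj (by simp)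
    set u := f (Sum.inl 0) with hu
    have hcu : c u ≠ 0 := (hadj ⟨0, by omega⟩).1
    have hnT : n ≤ (Finset.univ.filter fun w => c w ≠ 0 ∧ c w ≠ c u).card := by
      have hcardn : (Finset.univ : Finset (Fin n)).card = n := by simp
      have hle : (Finset.univ : Finset (Fin n)).card ≤
          (Finset.univ.filter fun w => c w ≠ 0 ∧ c w ≠ c u).card := by
        refine Finset.card_le_card_of_injOn (fun j => f (Sum.inr j)) ?_ ?_
        · intro j _
          simp only [Finset.mem_coe, Finset.mem_filter, Finset.mem_univ, true_and]
          obtain ⟨h1, h2, h3⟩ := hadj j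
          exact ⟨h2, fun h => h3 h.symm⟩
        · intro a _ b _ hab
          exact Sum.inr_injective (hf hab)
      rwa [hcardn] at hle
    have hsplit : (Finset.univ.filter fun w => c w ≠ 0 ∧ c w ≠ c u).card +
        (Finset.univ.filter fun w => ¬(c w ≠ 0 ∧ c w ≠ c u)).card = n + m + 1 := by
      rw [Finset.card_filter_add_card_filter_not]
      simp
    have hS0 : m + 2 ≤ (Finset.univ.filter fun w => ¬(c w ≠ 0 ∧ c w ≠ c u)).card := by
      have hsub : insert hub (Finset.univ.filter fun v => c v = c u) ⊆
          (Finset.univ.filter fun w => ¬(c w ≠ 0 ∧ c w ≠ c u)) := by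
        intro w hw
        rw [Finset.mem_insert] at hw
        simp only [Finset.mem_filter, Finset.mem_univ, true_and] at *
        rcases hw with rfl | hw
        · intro h; exact h.1 hchub
        · intro h; exact h.2 hw
      have hnotmem : hub ∉ (Finset.univ.filter fun v => c v = c u) := by
        simp only [Finset.mem_filter, Finset.mem_univ, true_and]
        rw [hchub]
        exact fun h => hcu h.symm
      calc m + 2 ≤ (Finset.univ.filter fun v => c v = c u).card + 1 := by
              have := hA u hcu; omega
        _ = (insert hub (Finset.univ.filter fun v => c v = c u)).card := by
              rw [Finset.card_insert_of_notMem hnotmem]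
        _ ≤ _ := Finset.card_le_card hsub
    omega
  · -- no C_{2m} in complement
    rintro ⟨v, C, hC, hlen⟩
    have hGc : ∀ u w : Fin (n + m + 1),
        (({ Adj := fun u v => c u ≠ 0 ∧ c v ≠ 0 ∧ c u ≠ c v
            symm := ⟨fun u v ⟨h1, h2, h3⟩ => ⟨h2, h1, h3.symm⟩⟩
            loopless := ⟨fun v h => h.2.2 rfl⟩ } : SimpleGraph (Fin (n + m + 1)))ᶜ).Adj u w →
        (c u = 0 ∨ c w = 0 ∨ c u = c w) := by
      intro u w h
      rw [SimpleGraph.compl_adj] at h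
      obtain ⟨hne, hna⟩ := h
      by_contra hcon
      push_neg at hcon
      exact hna ⟨hcon.1, hcon.2.1, hcon.2.2⟩
    by_cases hhub : hub ∈ C.support
    · have hC' : (C.rotate hub hhub).IsCycle := hC.rotate hhub
      have hlen' : (C.rotate hub hhub).length = 2 * m := by
        have h1 : (C.rotate hub hhub).darts.length = C.darts.length :=
          (C.rotate_darts hub hhub).perm.length_eq
        rw [SimpleGraph.Walk.length_darts, SimpleGraph.Walk.length_darts] at h1
        omega
      obtain ⟨u1, p, hps, hpl⟩ := cycle_tail_walk (C.rotate hub hhub) hC'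
      have hpnd : p.support.Nodup := by rw [hps]; exact hC'.support_nodup
      have hplen : p.length = 2 * m - 1 := by omega
      have hu1hub : hub ≠ u1 := by
        intro h
        subst h
        have hp : p.IsPath := SimpleGraph.Walk.IsPath.mk' hpnd
        have hq := SimpleGraph.Path.loop_eq (⟨p, hp⟩ : SimpleGraph.Path _ _ _)
        have : p = SimpleGraph.Walk.nil := congrArg Subtype.val hq
        rw [this] at hplen
        simp at hplen
        omega
      obtain ⟨w2, hadj2, q2, hq2⟩ := SimpleGraph.Walk.exists_eq_cons_of_ne hu1hub p.reverse
      have hrs : p.reverse.support = hub :: q2.support := by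
        rw [hq2, SimpleGraph.Walk.support_cons]
      have hrnd : p.reverse.support.Nodup := by
        rw [SimpleGraph.Walk.support_reverse]
        exact List.nodup_reverse.mpr hpnd
      rw [hrs] at hrnd
      have hhubq2 : hub ∉ q2.support := (List.nodup_cons.mp hrnd).1
      have hnd2 : q2.support.Nodup := (List.nodup_cons.mp hrnd).2
      have h0 : ∀ x ∈ q2.support, c x ≠ 0 := by
        intro x hx h
        rw [hc0 x h] at hx
        exact hhubq2 hx
      have hsame := walk_same_color' c hGc q2 h0
      have hcw2 : c w2 ≠ 0 := h0 w2 q2.start_mem_support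
      have hlen2 : q2.support.length = 2 * m - 1 := by
        have h1 : p.reverse.support.length = p.reverse.length + 1 :=
          SimpleGraph.Walk.length_support _
        rw [hrs, SimpleGraph.Walk.length_reverse] at h1
        simp only [List.length_cons] at h1
        omega
      have hsub : q2.support.toFinset ⊆ Finset.univ.filter (fun x => c x = c w2) := by
        intro x hx
        rw [List.mem_toFinset] at hx
        simp only [Finset.mem_filter, Finset.mem_univ, true_and]
        exact hsame x hx
      have hfin : 2 * m - 1 ≤ 2 * m - 2 := by
        calc 2 * m - 1 = q2.support.toFinset.card := by
              rw [List.toFinset_card_of_nodup hnd2, hlen2]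
          _ ≤ (Finset.univ.filter (fun x => c x = c w2)).card := Finset.card_le_card hsub
          _ ≤ 2 * m - 2 := hB w2 hcw2
      omega
    · have h0 : ∀ x ∈ C.support, c x ≠ 0 := by
        intro x hx h
        rw [hc0 x h] at hx
        exact hhub hx
      have hsame := walk_same_color' c hGc C h0
      have hcv : c v ≠ 0 := h0 v C.start_mem_support
      have hnd : C.support.tail.Nodup := hC.support_nodup
      have hlent : C.support.tail.length = 2 * m := by
        have h1 : C.support.length = C.length + 1 := SimpleGraph.Walk.length_support _
        rw [List.length_tail]
        omega
      have hsub : C.support.tail.toFinset ⊆ Finset.univ.filter (fun x => c x = c v) := by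
        intro x hx
        rw [List.mem_toFinset] at hx
        simp only [Finset.mem_filter, Finset.mem_univ, true_and]
        exact hsame x (List.tail_subset _ hx)
      have hfin : 2 * m ≤ 2 * m - 2 := by
        calc 2 * m = C.support.tail.toFinset.card := by
              rw [List.toFinset_card_of_nodup hnd, hlent]
          _ ≤ (Finset.univ.filter (fun x => c x = c v)).card := Finset.card_le_card hsub
          _ ≤ 2 * m - 2 := hB v hcv
      omega
end

section
/- Let m ≥ 6, q ≥ 2, and t ∈ {0,1,2} be integers, and set n = q(m+1) - t. Then there exists a simple graph G on n+m+1 vertices such that G contains no subgraph isomorphic to K_{2,n} and the complement of G contains no cycle of length 2m; in particular R(K_{2,n}, C_{2m}) > n+m+1. -/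
lemma exists_r (m q t n : ℕ) (hm : 6 ≤ m) (hq : 2 ≤ q) (ht : t ≤ 2)
    (hn : n = q * (m + 1) - t) :
    ∃ r : ℕ, 1 ≤ r ∧ r * (m + 2) ≤ n + m + 1 ∧ n + m + 1 ≤ r * (2 * m - 1) := by
  rcases eq_or_lt_of_le hq with h2 | h3
  · subst hn; rw [← h2]
    exact ⟨2, by omega, by omega, by omega⟩
  · set N := n + m + 1 with hN
    have hq3 : 3 ≤ q := h3
    have hA : 3 * (m + 1) ≤ q * (m + 1) := Nat.mul_le_mul_right _ hq3
    have hNbig : 3 * (m + 2) ≤ N := by omega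
    refine ⟨N / (m + 2), ?_, Nat.div_mul_le_self _ _, ?_⟩
    · have : 3 ≤ N / (m + 2) := (Nat.le_div_iff_mul_le (by omega)).2 (by omega)
      omega
    · set r := N / (m + 2) with hr
      have hr3 : 3 ≤ r := (Nat.le_div_iff_mul_le (by omega)).2 (by omega)
      have h1 : (m + 2) * r + N % (m + 2) = N := Nat.div_add_mod N (m + 2)
      have h2 : N % (m + 2) < m + 2 := Nat.mod_lt _ (by omega)
      have hsplit : 2 * m - 1 = (m + 2) + (m - 3) := by omega
      rw [hsplit, Nat.mul_add]
      have h4 : 3 * (m - 3) ≤ r * (m - 3) := Nat.mul_le_mul_right _ hr3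
      have h5 : (m + 2) * r = r * (m + 2) := Nat.mul_comm _ _
      omega

/-- For `m ≥ 6`, `q ≥ 2`, `t ∈ {0, 1, 2}` and `n = q(m+1) - t`, there is a
`K_{2,n}`-free graph on `n + m + 1` vertices whose complement has no cycle of
length `2m`; in particular `R(K_{2,n}, C_{2m}) > n + m + 1`. -/
theorem ramsey_badness_exceptional (m q t n : ℕ) (hm : 6 ≤ m) (hq : 2 ≤ q)
    (ht : t ≤ 2) (hn : n = q * (m + 1) - t) :
    ∃ G : SimpleGraph (Fin (n + m + 1)),
      ¬ Contains G (completeBipartiteGraph (Fin 2) (Fin n)) ∧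
      ¬ HasCycleLength Gᶜ (2 * m) := by
  obtain ⟨r, hr1, hrl, hru⟩ := exists_r m q t n hm hq ht hn
  set N := n + m + 1 with hN
  have hr0 : 0 < r := hr1
  set G : SimpleGraph (Fin N) :=
    SimpleGraph.fromRel (fun x y => (x : ℕ) % r ≠ (y : ℕ) % r) with hG
  -- the fiber of residue i
  set F : ℕ → Finset (Fin N) :=
    fun i => Finset.univ.filter (fun x : Fin N => (x : ℕ) % r = i) with hF
  have hmemF : ∀ (i : ℕ) (x : Fin N), x ∈ F i ↔ (x : ℕ) % r = i := by
    intro i x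
    rw [hF]
    simp
  have hFlow : ∀ i, i < r → m + 2 ≤ (F i).card := by
    intro i hi
    have hbound : ∀ j : Fin (m + 2), i + (j : ℕ) * r < N := by
      intro j
      have hj : (j : ℕ) ≤ m + 1 := by omega
      have h1 : (j : ℕ) * r ≤ (m + 1) * r := Nat.mul_le_mul_right _ hj
      have h2 : (m + 1) * r + r = r * (m + 2) := by ring
      omega
    have hcard : m + 2 = (Finset.univ : Finset (Fin (m + 2))).card := by simp
    rw [hcard]
    apply Finset.card_le_card_of_injOn
      (fun j : Fin (m + 2) => (⟨i + (j : ℕ) * r, hbound j⟩ : Fin N))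
    · intro j _
      rw [Finset.mem_coe, hmemF]
      show (i + (j : ℕ) * r) % r = i
      rw [Nat.add_mul_mod_self_right, Nat.mod_eq_of_lt hi]
    · intro a _ b _ hab
      have h1 : i + (a : ℕ) * r = i + (b : ℕ) * r := by
        simpa [Fin.ext_iff] using hab
      have h2 : (a : ℕ) * r = (b : ℕ) * r := by omega
      exact Fin.ext (Nat.eq_of_mul_eq_mul_right hr0 h2)
  have hFhigh : ∀ i, (F i).card ≤ 2 * m - 1 := by
    intro i
    have hcard : (Finset.range (2 * m - 1)).card = 2 * m - 1 := by simp
    rw [← hcard]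
    apply Finset.card_le_card_of_injOn (fun x : Fin N => (x : ℕ) / r)
    · intro x _
      simp only [Finset.mem_coe, Finset.mem_range]
      have hxN : (x : ℕ) < N := x.isLt
      have h2 : r * (2 * m - 1) = (2 * m - 1) * r := Nat.mul_comm _ _
      exact Nat.div_lt_of_lt_mul (by omega)
    · intro x hx y hy hxy
      rw [Finset.mem_coe, hmemF] at hx hy
      have h1 := Nat.div_add_mod (x : ℕ) r
      have h2 := Nat.div_add_mod (y : ℕ) r
      have h3 : (x : ℕ) / r = (y : ℕ) / r := hxy
      apply Fin.ext
      have h4 : r * ((x : ℕ) / r) = r * ((y : ℕ) / r) := by rw [h3]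
      omega
  refine ⟨G, ?_, ?_⟩
  · rintro ⟨f, hf⟩
    set u := f (Sum.inl 0) with hu
    set v := f (Sum.inl 1) with hv
    set S := Finset.univ.image f with hS
    have hScard : S.card = n + 2 := by
      rw [hS, Finset.card_image_of_injective _ hf, Finset.card_univ]
      simp [Fintype.card_sum]
      omega
    set i := (u : ℕ) % r with hi
    have hir : i < r := Nat.mod_lt _ hr0
    have hinter : S ∩ F i ⊆ {u, v} := by
      intro w hw
      rw [Finset.mem_inter] at hw
      obtain ⟨hwS, hwF⟩ := hw
      simp only [hS, Finset.mem_image, Finset.mem_univ, true_and] at hwS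
      obtain ⟨z, hz⟩ := hwS
      rcases z with a | j
      · fin_cases a
        · simp [← hz, hu]
        · simp [← hz, hv]
      · exfalso
        have hadj : (completeBipartiteGraph (Fin 2) (Fin n)).Adj (Sum.inl 0) (Sum.inr j) := by
          simp
        have hGadj : G.Adj u w := by rw [← hz]; exact f.map_adj hadj
        rw [hG, SimpleGraph.fromRel_adj] at hGadj
        rw [hmemF] at hwF
        have heq : (u : ℕ) % r = (w : ℕ) % r := by rw [hwF, hi]
        rcases hGadj.2 with h | h
        · exact h heq
        · exact h heq.symm
    have hcap : (S ∩ F i).card ≤ 2 := by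
      calc (S ∩ F i).card ≤ ({u, v} : Finset (Fin N)).card := Finset.card_le_card hinter
        _ ≤ 2 := (Finset.card_insert_le _ _).trans (by simp)
    have hcup : (S ∪ F i).card ≤ N := by
      have h := Finset.card_le_univ (S ∪ F i)
      simpa using h
    have hkey := Finset.card_union_add_card_inter S (F i)
    have hFl := hFlow i hir
    omega
  · rintro ⟨v, c, hc, hlen⟩
    have hres : ∀ {a b : Fin N} (w : (Gᶜ).Walk a b), ∀ x ∈ w.support,
        (x : ℕ) % r = (a : ℕ) % r := by
      intro a b w
      induction w with
      | nil => intro x hx; simp at hx; rw [hx]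
      | @cons a' b' c' h p ih =>
        intro x hx
        rw [SimpleGraph.Walk.support_cons] at hx
        rcases List.mem_cons.1 hx with h1 | h2
        · rw [h1]
        · have hstep : (a' : ℕ) % r = (b' : ℕ) % r := by
            rw [SimpleGraph.compl_adj, hG, SimpleGraph.fromRel_adj] at h
            by_contra hne
            exact h.2 ⟨h.1, Or.inl hne⟩
          rw [ih x h2, ← hstep]
    set i := (v : ℕ) % r with hi
    set T := c.support.tail.toFinset with hT
    have hTcard : T.card = 2 * m := by
      rw [hT, List.toFinset_card_of_nodup hc.support_nodup]
      rw [List.length_tail, SimpleGraph.Walk.length_support]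
      omega
    have hTsub : T ⊆ F i := by
      intro x hx
      rw [hT, List.mem_toFinset] at hx
      have hxsup : x ∈ c.support := List.mem_of_mem_tail hx
      rw [hmemF]
      exact hres c x hxsup
    have h1 := Finset.card_le_card hTsub
    have h2 := hFhigh i
    omega
end

section
/- Let m ≥ 3, p ≥ 1, and t be integers with p+1 ≤ t ≤ m+p-2. Let H be the graph on (p+1)m+t+1 vertices obtained as the join of a single vertex with the disjoint union of one complete graph K_{m+t-p} and p copies of the complete graph K_{m+1}. Then H contains no cycle of length 2m, and the complement of H contains no subgraph isomorphic to K_{2, pm+t}. -/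
/-- The join of two graphs: their disjoint union together with all edges
between the two vertex sets. -/
def graphJoin {α β : Type*} (G : SimpleGraph α) (H : SimpleGraph β) :
    SimpleGraph (α ⊕ β) where
  Adj u v :=
    match u, v with
    | Sum.inl a, Sum.inl b => G.Adj a b
    | Sum.inr a, Sum.inr b => H.Adj a b
    | _, _ => True
  symm := ⟨by
    rintro (a | a) (b | b) h
    · exact G.adj_symm h
    · trivial
    · trivial
    · exact H.adj_symm h⟩
  loopless := ⟨by
    rintro (a | a) h
    · exact G.loopless.irrefl a h
    · exact H.loopless.irrefl a h⟩

/-- The disjoint union of `p` copies of the complete graph `K_k`. -/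
def cliqueCopies (p k : ℕ) : SimpleGraph (Fin p × Fin k) where
  Adj a b := a.1 = b.1 ∧ a ≠ b
  symm := ⟨fun _ _ h => ⟨h.1.symm, h.2.symm⟩⟩
  loopless := ⟨fun _ h => h.2 rfl⟩

/-- Component index of a vertex: `0` for the join vertex, `1` for the big
clique, `i+2` for the `i`-th clique copy. -/
private def comp3 {a b c d : ℕ} : (Fin a ⊕ (Fin b ⊕ Fin c × Fin d)) → ℕ
  | Sum.inl _ => 0
  | Sum.inr (Sum.inl _) => 1
  | Sum.inr (Sum.inr x) => (x.1 : ℕ) + 2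

private def ex1 {a b c d : ℕ} (h : 0 < b) : (Fin a ⊕ (Fin b ⊕ Fin c × Fin d)) → Fin b
  | Sum.inr (Sum.inl y) => y
  | _ => ⟨0, h⟩

private def ex2 {a b c d : ℕ} (h : 0 < d) : (Fin a ⊕ (Fin b ⊕ Fin c × Fin d)) → Fin d
  | Sum.inr (Sum.inr y) => y.2
  | _ => ⟨0, h⟩

private lemma chain_const {α : Type*} (f : α → ℕ) (R : α → α → Prop)
    (hR : ∀ x y, R x y → f x ≠ 0 → f y ≠ 0 → f x = f y) :
    ∀ (l : List α) (a : α), List.Chain R a l →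
      (∀ x ∈ a :: l, f x ≠ 0) → ∀ x ∈ a :: l, f x = f a := by
  intro l
  induction l with
  | nil => intro a _ _ x hx; rw [List.mem_singleton] at hx; rw [hx]
  | cons b l ih =>
    intro a hch h0 x hx
    replace hch : R a b ∧ List.Chain R b l := List.chain_cons.1 hch
    have hab : f a = f b := hR a b hch.1 (h0 a (by simp)) (h0 b (by simp))
    rcases List.mem_cons.1 hx with rfl | hx
    · rfl
    · rw [ih b hch.2 (fun z hz => h0 z (List.mem_cons_of_mem a hz)) x hx, hab]

private lemma key_lemma (m p t : ℕ) (hm : 3 ≤ m) (hp : 1 ≤ p)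
    (ht₁ : p + 1 ≤ t) (ht₂ : t ≤ m + p - 2)
    (R : (Fin 1 ⊕ (Fin (m + t - p) ⊕ Fin p × Fin (m + 1))) →
         (Fin 1 ⊕ (Fin (m + t - p) ⊕ Fin p × Fin (m + 1))) → Prop)
    (hadj : ∀ x y, R x y → comp3 x ≠ 0 → comp3 y ≠ 0 → comp3 x = comp3 y)
    (l : List (Fin 1 ⊕ (Fin (m + t - p) ⊕ Fin p × Fin (m + 1))))
    (hnd : l.Nodup) (hch : List.Chain' R l)
    (h0 : ∀ x ∈ l, comp3 x ≠ 0) : l.length ≤ 2 * m - 2 := by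
  have hm0 : 0 < m + t - p := by omega
  have hm1 : 0 < m + 1 := by omega
  match l, hnd, hch, h0 with
  | [], _, _, _ => simp
  | a :: l', hnd, hch, h0 =>
    have hconst : ∀ x ∈ a :: l', comp3 x = comp3 a :=
      chain_const comp3 R hadj l' a hch h0
    have hcard : (a :: l').toFinset.card = (a :: l').length :=
      List.toFinset_card_of_nodup hnd
    have hmem : a ∈ a :: l' := List.mem_cons_self
    rcases ha : a with x | x | ⟨i, x⟩ <;> subst ha
    · exact absurd rfl (h0 _ hmem)
    · have shape : ∀ z : Fin 1 ⊕ (Fin (m + t - p) ⊕ Fin p × Fin (m + 1)),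
          comp3 z = 1 → z = Sum.inr (Sum.inl (ex1 hm0 z)) := by
        rintro (z | z | z) hz
        · simp [comp3] at hz
        · rfl
        · simp [comp3] at hz
      have hca : comp3 (Sum.inr (Sum.inl x) :
          Fin 1 ⊕ (Fin (m + t - p) ⊕ Fin p × Fin (m + 1))) = 1 := rfl
      have hle : (Sum.inr (Sum.inl x) :: l').toFinset.card ≤
          (Finset.univ : Finset (Fin (m + t - p))).card := by
        refine Finset.card_le_card_of_injOn (ex1 hm0) (fun z _ => Finset.mem_univ _) ?_
        intro z₁ h₁ z₂ h₂ he
        rw [Finset.mem_coe, List.mem_toFinset] at h₁ h₂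
        rw [shape z₁ (by rw [hconst z₁ h₁, hca]), shape z₂ (by rw [hconst z₂ h₂, hca])]
        exact congrArg (fun w => Sum.inr (Sum.inl w)) he
      rw [hcard, Finset.card_univ, Fintype.card_fin] at hle
      omega
    · have shape : ∀ z : Fin 1 ⊕ (Fin (m + t - p) ⊕ Fin p × Fin (m + 1)),
          comp3 z = (i : ℕ) + 2 → z = Sum.inr (Sum.inr (i, ex2 hm1 z)) := by
        rintro (z | z | ⟨j, z⟩) hz
        · simp [comp3] at hz
        · simp [comp3] at hz
        · simp only [comp3, Nat.add_right_cancel_iff] at hz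
          have : j = i := Fin.ext (by exact_mod_cast hz)
          rw [this]; rfl
      have hca : comp3 (Sum.inr (Sum.inr (i, x)) :
          Fin 1 ⊕ (Fin (m + t - p) ⊕ Fin p × Fin (m + 1))) = (i : ℕ) + 2 := rfl
      have hle : (Sum.inr (Sum.inr (i, x)) :: l').toFinset.card ≤
          (Finset.univ : Finset (Fin (m + 1))).card := by
        refine Finset.card_le_card_of_injOn (ex2 hm1) (fun z _ => Finset.mem_univ _) ?_
        intro z₁ h₁ z₂ h₂ he
        rw [Finset.mem_coe, List.mem_toFinset] at h₁ h₂
        rw [shape z₁ (by rw [hconst z₁ h₁, hca]), shape z₂ (by rw [hconst z₂ h₂, hca])]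
        exact congrArg (fun w => Sum.inr (Sum.inr (i, w))) he
      rw [hcard, Finset.card_univ, Fintype.card_fin] at hle
      omega

/-- For `m ≥ 3`, `p ≥ 1` and `p + 1 ≤ t ≤ m + p - 2`, the join of a single
vertex with `K_{m+t-p} ∪ p · K_{m+1}` has no cycle of length `2m`, and its
complement contains no `K_{2, pm+t}`. -/
theorem construction_one (m p t : ℕ) (hm : 3 ≤ m) (hp : 1 ≤ p)
    (ht₁ : p + 1 ≤ t) (ht₂ : t ≤ m + p - 2) :
    ¬ HasCycleLength
        (graphJoin (⊤ : SimpleGraph (Fin 1))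
          ((⊤ : SimpleGraph (Fin (m + t - p))) ⊕g cliqueCopies p (m + 1)))
        (2 * m) ∧
    ¬ Contains
        (graphJoin (⊤ : SimpleGraph (Fin 1))
          ((⊤ : SimpleGraph (Fin (m + t - p))) ⊕g cliqueCopies p (m + 1)))ᶜ
        (completeBipartiteGraph (Fin 2) (Fin (p * m + t))) := by
  set V := (Fin 1 ⊕ (Fin (m + t - p) ⊕ Fin p × Fin (m + 1))) with hV
  set H := graphJoin (⊤ : SimpleGraph (Fin 1))
      ((⊤ : SimpleGraph (Fin (m + t - p))) ⊕g cliqueCopies p (m + 1)) with hH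
  have hadj : ∀ x y : V, H.Adj x y → comp3 x ≠ 0 → comp3 y ≠ 0 → comp3 x = comp3 y := by
    rintro (x | x | ⟨i, x⟩) (y | y | ⟨j, y⟩) h hx hy
    · exact absurd rfl hx
    · exact absurd rfl hx
    · exact absurd rfl hx
    · exact absurd rfl hy
    · rfl
    · exact absurd h (by simp [hH, graphJoin])
    · exact absurd rfl hy
    · exact absurd h (by simp [hH, graphJoin])
    · have : i = j := (show (i, x).1 = (j, y).1 ∧ (i, x) ≠ (j, y) from h).1
      simp [comp3, this]
  have hc0 : ∀ x : V, comp3 x = 0 → x = Sum.inl 0 := by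
    rintro (x | x | x) h
    · exact congrArg Sum.inl (Subsingleton.elim x 0)
    · simp [comp3] at h
    · simp [comp3] at h
  constructor
  · -- no cycle of length 2m
    rintro ⟨v, c, hc, hlen⟩
    rcases Classical.em ((Sum.inl 0 : V) ∈ c.support) with hv0 | hv0
    · set c' := c.rotate _ hv0 with hc'def
      have hc' : c'.IsCycle := hc.rotate hv0
      have hlen' : c'.length = 2 * m := by
        have h := (c.rotate_darts _ hv0).perm.length_eq
        rwa [SimpleGraph.Walk.length_darts, SimpleGraph.Walk.length_darts, hlen] at h
      have htlen : c'.support.tail.length = 2 * m := by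
        have := c'.length_support
        have h2 : c'.support.length = c'.support.tail.length + 1 := by
          rw [SimpleGraph.Walk.support_eq_cons]; rfl
        omega
      have htne : c'.support.tail ≠ [] := by
        intro h; rw [h] at htlen; simp at htlen; omega
      have hgl : c'.support.tail.getLast htne = Sum.inl 0 := by
        rw [List.getLast_tail]
        exact c'.getLast_support
      set l := c'.support.tail.dropLast with hldef
      have hsplit : c'.support.tail = l ++ [(Sum.inl 0 : V)] := by
        have h3 := List.dropLast_concat_getLast htne
        rw [hgl] at h3
        exact h3.symm
      have hndtail := hc'.support_nodup
      rw [hsplit, List.nodup_append] at hndtail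
      have hnd : l.Nodup := hndtail.1
      have hdisj : (Sum.inl 0 : V) ∉ l := fun h =>
        hndtail.2.2 _ h _ (List.mem_singleton_self _) rfl
      have hch : List.Chain' H.Adj l := by
        have h1 := c'.isChain_adj_support.tail
        rw [hsplit] at h1
        exact h1.left_of_append
      have h0 : ∀ x ∈ l, comp3 x ≠ 0 := fun x hx h =>
        hdisj (hc0 x h ▸ hx)
      have hkey := key_lemma m p t hm hp ht₁ ht₂ H.Adj hadj l hnd hch h0
      have hllen : l.length + 1 = 2 * m := by
        have := congrArg List.length hsplit
        simp at this
        omega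
      omega
    · set l := c.support.tail with hldef
      have hnd : l.Nodup := hc.support_nodup
      have hch : List.Chain' H.Adj l := c.isChain_adj_support.tail
      have h0 : ∀ x ∈ l, comp3 x ≠ 0 := by
        intro x hx h
        exact hv0 (hc0 x h ▸ List.mem_of_mem_tail hx)
      have hkey := key_lemma m p t hm hp ht₁ ht₂ H.Adj hadj l hnd hch h0
      have hllen : l.length = 2 * m := by
        rw [hldef]
        have h2 : c.support.length = c.support.tail.length + 1 := by
          rw [SimpleGraph.Walk.support_eq_cons]; rfl
        have := c.length_support
        omega
      omega
  · -- no K_{2, pm+t} in the complement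
    rintro ⟨f, hf⟩
    have hnon : ∀ x y : V, x ≠ y → ¬ H.Adj x y →
        comp3 x ≠ 0 ∧ comp3 y ≠ 0 ∧ comp3 x ≠ comp3 y := by
      rintro (x | x | ⟨i, x⟩) (y | y | ⟨j, y⟩) hne h
      · exact absurd (congrArg Sum.inl (Subsingleton.elim x y)) hne
      · exact absurd trivial h
      · exact absurd trivial h
      · exact absurd trivial h
      · refine ⟨by simp [comp3], by simp [comp3], ?_⟩
        exact absurd ((SimpleGraph.top_adj x y).2 (fun he => hne (by rw [he]))) h
      · exact ⟨by simp [comp3], by simp [comp3], by simp [comp3]⟩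
      · exact absurd trivial h
      · exact ⟨by simp [comp3], by simp [comp3], by simp [comp3]⟩
      · refine ⟨by simp [comp3], by simp [comp3], ?_⟩
        intro he
        simp only [comp3, Nat.add_right_cancel_iff] at he
        have hij : i = j := Fin.ext (by exact_mod_cast he)
        exact h (show (i, x).1 = (j, y).1 ∧ (i, x) ≠ (j, y) from ⟨hij, fun hxy => hne (by rw [hxy])⟩)
    set a := f (Sum.inl 0) with hadef
    have hfacts : ∀ j : Fin (p * m + t), comp3 a ≠ 0 ∧
        comp3 (f (Sum.inr j)) ≠ 0 ∧ comp3 a ≠ comp3 (f (Sum.inr j)) := by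
      intro j
      have h : Hᶜ.Adj a (f (Sum.inr j)) := f.map_adj (by simp)
      rw [SimpleGraph.compl_adj] at h
      exact hnon _ _ h.1 h.2
    -- the image of the big side
    set S : Finset V := Finset.image (fun j : Fin (p * m + t) => f (Sum.inr j))
        Finset.univ with hSdef
    have hScard : S.card = p * m + t := by
      rw [hSdef, Finset.card_image_of_injective _
        (fun j₁ j₂ h => by
          have := hf h
          exact Sum.inr_injective this), Finset.card_univ, Fintype.card_fin]
    have hcount : ∀ (W : Finset V), W.card = m + 2 →
        (∀ x ∈ W, comp3 x = 0 ∨ comp3 x = comp3 a) → False := by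
      intro W hWcard hWcomp
      have hdisj : Disjoint S W := by
        rw [Finset.disjoint_left]
        intro x hxS hxW
        rw [hSdef, Finset.mem_image] at hxS
        obtain ⟨j, _, rfl⟩ := hxS
        obtain ⟨h1, h2, h3⟩ := hfacts j
        rcases hWcomp _ hxW with h | h
        · exact h2 h
        · exact h3 h.symm
      have hle : (S ∪ W).card ≤ Fintype.card V := Finset.card_le_univ _
      rw [Finset.card_union_of_disjoint hdisj, hScard, hWcard] at hle
      have hcV : Fintype.card V = 1 + ((m + t - p) + p * (m + 1)) := by
        show Fintype.card (Fin 1 ⊕ (Fin (m + t - p) ⊕ Fin p × Fin (m + 1))) = _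
        simp [Fintype.card_sum, Fintype.card_prod]
      rw [hcV] at hle
      have hmul : p * (m + 1) = p * m + p := by ring
      omega
    have ha0 : comp3 a ≠ 0 := (hfacts ⟨0, by omega⟩).1
    have hm0 : (0 : ℕ) < m + t - p := by omega
    have hmtp : m + 1 ≤ m + t - p := by omega
    rcases haval : a with x | x | ⟨i, x⟩
    · exact ha0 (by rw [haval]; rfl)
    · -- comp3 a = 1, use the big clique
      refine hcount (insert (Sum.inl 0) (Finset.image
        (fun j : Fin (m + 1) => (Sum.inr (Sum.inl (Fin.castLE hmtp j)) : V))
        Finset.univ)) ?_ ?_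
      · rw [Finset.card_insert_of_notMem (by simp), Finset.card_image_of_injective _
          (fun j₁ j₂ h => Fin.castLE_injective hmtp
            (Sum.inl_injective (Sum.inr_injective h))),
          Finset.card_univ, Fintype.card_fin]
      · intro z hz
        rcases Finset.mem_insert.1 hz with rfl | hz
        · left; rfl
        · rw [Finset.mem_image] at hz
          obtain ⟨j, _, rfl⟩ := hz
          right; rw [haval]; rfl
    · -- comp3 a = i + 2, use clique copy i
      refine hcount (insert (Sum.inl 0) (Finset.image
        (fun j : Fin (m + 1) => (Sum.inr (Sum.inr (i, j)) : V))
        Finset.univ)) ?_ ?_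
      · rw [Finset.card_insert_of_notMem (by simp), Finset.card_image_of_injective _
          (fun j₁ j₂ h =>
            (Prod.ext_iff.mp (Sum.inr_injective (Sum.inr_injective h))).2),
          Finset.card_univ, Fintype.card_fin]
      · intro z hz
        rcases Finset.mem_insert.1 hz with rfl | hz
        · left; rfl
        · rw [Finset.mem_image] at hz
          obtain ⟨j, _, rfl⟩ := hz
          right; rw [haval]; rfl
end
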